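/- arXiv:0806.3682 — 3 statements merged into one kernel-verified Lean document; each statement's English description precedes it below -/
import Mathlib

section
/- For colored permutations (σ',u') of size k and (σ'',u'') of size m, the product of the corresponding dual free colored quasi-ribbons in the free associative algebra satisfies G_{σ',u'} · G_{σ'',u''} = Σ_{σ ∈ σ'∗σ''} G_{σ, u'·u''}, where u'·u'' denotes the concatenation of the color words and σ'∗σ'' is the convolution of σ' and σ''. Consequently, the dual free colored quasi-ribbons span a ℤ-subalgebra FQSym^(ℓ) of the free associative algebra ℤ⟨𝐀⟩. -/
open scoped BigOperators

/-- Noncommutative formal series over the colored alphabet `ℕ × Fin ℓ`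
(more generally over `α × Fin ℓ`), as coefficient functions on words. -/
abbrev Series (α : Type) (ℓ : ℕ) : Type := List (α × Fin ℓ) → ℤ

/-- Product of noncommutative series: the coefficient of a word `w` in `F * G`
is the sum over all factorizations `w = w₁ · w₂` of `F w₁ * G w₂`. -/
def ncMul {α : Type} {ℓ : ℕ} (F G : Series α ℓ) : Series α ℓ :=
  fun w => ∑ k ∈ Finset.range (w.length + 1), F (w.take k) * G (w.drop k)

/-- Standardization of a word over a totally ordered alphabet, as the list of
(0-based) ranks: position `i` receives the number of positions `j` with a
strictly smaller letter, or an equal letter strictly to the left. -/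
def stdList {α : Type} [LinearOrder α] (v : List α) : List ℕ :=
  v.mapIdx fun i a =>
    ((List.range v.length).filter fun j =>
      v.getD j a < a ∨ (v.getD j a = a ∧ j < i)).length

/-- The word (0-based) of a permutation of `Fin n`. -/
def permList {n : ℕ} (σ : Equiv.Perm (Fin n)) : List ℕ :=
  (List.finRange n).map fun i => (σ i : ℕ)

/-- The word of colors of a coloring `u : Fin n → Fin ℓ`. -/
def colorList {n ℓ : ℕ} (u : Fin n → Fin ℓ) : List (Fin ℓ) :=
  (List.finRange n).map u

/-- The dual free colored quasi-ribbon `G_{σ,u}`: the (formal) sum of all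
colored words `w` of length `n` whose colored standardization is `(σ, u)`. -/
def Gfun {α : Type} [LinearOrder α] {ℓ n : ℕ} (σ : Equiv.Perm (Fin n))
    (u : Fin n → Fin ℓ) : Series α ℓ :=
  fun w =>
    if stdList (w.map Prod.fst) = permList σ ∧ w.map Prod.snd = colorList u
    then 1 else 0

namespace FQAux

def rk (v : List ℕ) (i : ℕ) : ℕ :=
  ((Finset.range v.length).filter fun j =>
    v.getD j 0 < v.getD i 0 ∨ (v.getD j 0 = v.getD i 0 ∧ j < i)).card

lemma length_stdList (v : List ℕ) : (stdList v).length = v.length := by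
  simp [stdList]

lemma stdList_getD (v : List ℕ) (i : ℕ) (hi : i < v.length) :
    (stdList v).getD i 0 = rk v i := by
  have h' : i < (stdList v).length := by rw [length_stdList]; exact hi
  rw [List.getD_eq_getElem _ _ h']
  show (stdList v).get ⟨i, h'⟩ = _
  unfold stdList
  rw [List.get_eq_getElem, List.getElem_mapIdx]
  rw [rk]
  rw [show ((Finset.range v.length).filter fun j =>
    v.getD j 0 < v.getD i 0 ∨ (v.getD j 0 = v.getD i 0 ∧ j < i)).card
    = ((List.range v.length).filter fun j =>
    v.getD j 0 < v.getD i 0 ∨ (v.getD j 0 = v.getD i 0 ∧ j < i)).length from rfl]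
  congr 1
  apply List.filter_congr
  intro j hj
  have hj' : j < v.length := List.mem_range.mp hj
  simp only [List.getD_eq_getElem _ _ hj', List.getD_eq_getElem _ _ hi, List.get_eq_getElem]

lemma rk_mono (v : List ℕ) {i i' : ℕ} (hi : i < v.length) (hi' : i' < v.length)
    (h : v.getD i 0 < v.getD i' 0 ∨ (v.getD i 0 = v.getD i' 0 ∧ i < i')) :
    rk v i < rk v i' := by
  apply Finset.card_lt_card
  have hsub : ((Finset.range v.length).filter fun j =>
      v.getD j 0 < v.getD i 0 ∨ (v.getD j 0 = v.getD i 0 ∧ j < i)) ⊆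
      ((Finset.range v.length).filter fun j =>
      v.getD j 0 < v.getD i' 0 ∨ (v.getD j 0 = v.getD i' 0 ∧ j < i')) := by
    intro j hj
    simp only [Finset.mem_filter, Finset.mem_range] at *
    exact ⟨hj.1, by rcases hj.2 with h1 | h1 <;> rcases h with h2 | h2 <;> omega⟩
  rw [Finset.ssubset_iff_of_subset hsub]
  refine ⟨i, ?_, ?_⟩
  · simp only [Finset.mem_filter, Finset.mem_range]
    exact ⟨hi, h⟩
  · simp only [Finset.mem_filter, Finset.mem_range]
    omega

lemma rk_lt_length (v : List ℕ) {i : ℕ} (hi : i < v.length) : rk v i < v.length := by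
  have : rk v i < (Finset.range v.length).card := by
    apply Finset.card_lt_card
    rw [Finset.ssubset_iff_of_subset (Finset.filter_subset _ _)]
    exact ⟨i, Finset.mem_range.mpr hi, by simp only [Finset.mem_filter]; omega⟩
  simpa using this

lemma rk_lt_iff (v : List ℕ) {i i' : ℕ} (hi : i < v.length) (hi' : i' < v.length) :
    rk v i < rk v i' ↔
      (v.getD i 0 < v.getD i' 0 ∨ (v.getD i 0 = v.getD i' 0 ∧ i < i')) := by
  constructor
  · intro h
    by_contra hR
    rcases eq_or_ne i i' with rfl | hne
    · exact lt_irrefl _ h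
    · have hR' : v.getD i' 0 < v.getD i 0 ∨ (v.getD i' 0 = v.getD i 0 ∧ i' < i) := by
        push_neg at hR; omega
      have := rk_mono v hi' hi hR'
      omega
  · exact rk_mono v hi hi'

lemma rk_ne (v : List ℕ) {i i' : ℕ} (hne : i ≠ i') (hi : i < v.length) (hi' : i' < v.length) :
    rk v i ≠ rk v i' := by
  have h1 := rk_lt_iff v hi hi'
  have h2 := rk_lt_iff v hi' hi
  omega

lemma rk_cond_iff (v : List ℕ) {i j : ℕ} (hi : i < v.length) (hj : j < v.length) :
    (rk v j < rk v i ∨ (rk v j = rk v i ∧ j < i)) ↔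
      (v.getD j 0 < v.getD i 0 ∨ (v.getD j 0 = v.getD i 0 ∧ j < i)) := by
  rcases eq_or_ne j i with rfl | hne
  · omega
  · have h1 := rk_lt_iff v hj hi
    have h2 := rk_ne v hne hj hi
    omega

end FQAux

namespace FQAux

lemma getD_take (v : List ℕ) {k x : ℕ} (hx : x < (v.take k).length) :
    (v.take k).getD x 0 = v.getD x 0 := by
  have hx' : x < v.length := by simp [List.length_take] at hx; omega
  rw [List.getD_eq_getElem _ _ hx, List.getD_eq_getElem _ _ hx']
  simp

lemma getD_drop (v : List ℕ) {k x : ℕ} (hx : x < (v.drop k).length) :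
    (v.drop k).getD x 0 = v.getD (k + x) 0 := by
  have hx' : k + x < v.length := by simp [List.length_drop] at hx; omega
  rw [List.getD_eq_getElem _ _ hx, List.getD_eq_getElem _ _ hx']
  simp

lemma rk_take (v : List ℕ) (k : ℕ) {i : ℕ} (hi : i < (v.take k).length) :
    rk (v.take k) i = ((Finset.range (v.take k).length).filter fun j =>
      v.getD j 0 < v.getD i 0 ∨ (v.getD j 0 = v.getD i 0 ∧ j < i)).card := by
  rw [rk]
  congr 1
  apply Finset.filter_congr
  intro j hj
  rw [getD_take v (Finset.mem_range.mp hj), getD_take v hi]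

lemma rk_drop (v : List ℕ) (k : ℕ) {i : ℕ} (hi : i < (v.drop k).length) :
    rk (v.drop k) i = ((Finset.range (v.drop k).length).filter fun j =>
      v.getD (k + j) 0 < v.getD (k + i) 0 ∨ (v.getD (k + j) 0 = v.getD (k + i) 0 ∧ j < i)).card := by
  rw [rk]
  congr 1
  apply Finset.filter_congr
  intro j hj
  rw [getD_drop v (Finset.mem_range.mp hj), getD_drop v hi]

lemma stdList_take (v : List ℕ) (k : ℕ) :
    stdList ((stdList v).take k) = stdList (v.take k) := by
  have hlen : (stdList v).length = v.length := length_stdList v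
  have hlen2 : ((stdList v).take k).length = (v.take k).length := by
    simp [List.length_take, hlen]
  apply List.ext_getElem
  · rw [length_stdList, length_stdList, hlen2]
  · intro i h1 h2
    rw [length_stdList] at h1 h2
    rw [← List.getD_eq_getElem _ 0, ← List.getD_eq_getElem _ 0]
    rw [stdList_getD _ _ h1, stdList_getD _ _ h2, rk_take _ _ h1, rk_take _ _ h2, hlen2]
    congr 1
    apply Finset.filter_congr
    intro j hj
    have hj1 : j < (v.take k).length := Finset.mem_range.mp hj
    have hjv : j < v.length := by simp [List.length_take] at hj1; omega
    have hiv : i < v.length := by simp [List.length_take] at h2; omega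
    have hjs : j < (stdList v).length := by omega
    have his : i < (stdList v).length := by omega
    rw [stdList_getD _ _ hjv, stdList_getD _ _ hiv]
    exact rk_cond_iff v hiv hjv

lemma stdList_drop (v : List ℕ) (k : ℕ) :
    stdList ((stdList v).drop k) = stdList (v.drop k) := by
  have hlen : (stdList v).length = v.length := length_stdList v
  have hlen2 : ((stdList v).drop k).length = (v.drop k).length := by
    simp [List.length_drop, hlen]
  apply List.ext_getElem
  · rw [length_stdList, length_stdList, hlen2]
  · intro i h1 h2
    rw [length_stdList] at h1 h2
    rw [← List.getD_eq_getElem _ 0, ← List.getD_eq_getElem _ 0]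
    rw [stdList_getD _ _ h1, stdList_getD _ _ h2, rk_drop _ _ h1, rk_drop _ _ h2, hlen2]
    congr 1
    apply Finset.filter_congr
    intro j hj
    have hj1 : j < (v.drop k).length := Finset.mem_range.mp hj
    have hjv : k + j < v.length := by simp [List.length_drop] at hj1; omega
    have hiv : k + i < v.length := by simp [List.length_drop] at h2; omega
    rw [stdList_getD _ _ hjv, stdList_getD _ _ hiv]
    have := rk_cond_iff v hiv hjv
    omega

end FQAux

namespace FQAux

lemma length_permList {n : ℕ} (σ : Equiv.Perm (Fin n)) : (permList σ).length = n := by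
  simp [permList]

lemma permList_getD {n : ℕ} (σ : Equiv.Perm (Fin n)) {i : ℕ} (hi : i < n) :
    (permList σ).getD i 0 = (σ ⟨i, hi⟩ : ℕ) := by
  have h' : i < (permList σ).length := by rw [length_permList]; exact hi
  rw [List.getD_eq_getElem _ _ h']
  simp [permList]

lemma permList_inj {n : ℕ} {σ τ : Equiv.Perm (Fin n)} (h : permList σ = permList τ) :
    σ = τ := by
  ext i
  have := congrArg (fun l => l.getD (i : ℕ) 0) h
  simp only [permList_getD σ i.isLt, permList_getD τ i.isLt] at this
  simpa using this

lemma exists_stdPerm (v : List ℕ) {n : ℕ} (hn : v.length = n) :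
    ∃ σ : Equiv.Perm (Fin n), permList σ = stdList v := by
  have hb : ∀ i : Fin n, rk v (i : ℕ) < n := fun i => by
    have := rk_lt_length v (i := (i : ℕ)) (by omega)
    omega
  let f : Fin n → Fin n := fun i => ⟨rk v (i : ℕ), hb i⟩
  have hinj : Function.Injective f := by
    intro a b hab
    by_contra hne
    have hv : (a : ℕ) ≠ (b : ℕ) := fun h => hne (Fin.ext h)
    exact rk_ne v hv (by omega) (by omega) (congrArg Fin.val hab)
  let σ : Equiv.Perm (Fin n) := Equiv.ofBijective f (Finite.injective_iff_bijective.mp hinj)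
  refine ⟨σ, ?_⟩
  apply List.ext_getElem
  · rw [length_permList, length_stdList, hn]
  · intro i h1 h2
    rw [length_permList] at h1
    rw [length_stdList] at h2
    rw [← List.getD_eq_getElem _ 0, ← List.getD_eq_getElem _ 0]
    rw [permList_getD σ h1, stdList_getD _ _ h2]
    show ((Equiv.ofBijective f _) ⟨i, h1⟩ : ℕ) = rk v i
    rw [Equiv.ofBijective_apply]

lemma colorList_getElem {n ℓ : ℕ} (u : Fin n → Fin ℓ) {i : ℕ} (h : i < (colorList u).length)
    (h' : i < n) : (colorList u)[i] = u ⟨i, h'⟩ := by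
  simp only [colorList, List.getElem_map, List.getElem_finRange]
  exact congrArg u (Fin.ext rfl)

lemma colorList_append {k m ℓ : ℕ} (u' : Fin k → Fin ℓ) (u'' : Fin m → Fin ℓ) :
    colorList (Fin.append u' u'') = colorList u' ++ colorList u'' := by
  apply List.ext_getElem
  · simp [colorList]
  · intro i h1 h2
    have hi : i < k + m := by simpa [colorList] using h1
    rw [colorList_getElem _ h1 hi]
    by_cases hik : i < k
    · rw [List.getElem_append_left (show i < (colorList u').length by simp [colorList]; omega)]
      rw [colorList_getElem _ _ hik]
      rw [show (⟨i, hi⟩ : Fin (k+m)) = Fin.castAdd m ⟨i, hik⟩ from rfl]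
      exact Fin.append_left u' u'' _
    · rw [List.getElem_append_right (show (colorList u').length ≤ i by simp [colorList]; omega)]
      rw [colorList_getElem _ _ (show i - (colorList u').length < m by simp [colorList]; omega)]
      rw [show (⟨i, hi⟩ : Fin (k+m)) = Fin.natAdd k ⟨i - k, by omega⟩ from Fin.ext (by simp; omega)]
      rw [Fin.append_right]
      congr 1
      apply Fin.ext
      simp [colorList]

end FQAux

namespace FQAux

lemma Gmul (ℓ k m : ℕ) (σ' : Equiv.Perm (Fin k)) (u' : Fin k → Fin ℓ)
    (σ'' : Equiv.Perm (Fin m)) (u'' : Fin m → Fin ℓ) :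
    ncMul (Gfun (α := ℕ) σ' u') (Gfun σ'' u'') =
      ∑ σ ∈ Finset.univ.filter (fun σ : Equiv.Perm (Fin (k + m)) =>
          stdList ((permList σ).take k) = permList σ' ∧
          stdList ((permList σ).drop k) = permList σ''),
        Gfun σ (Fin.append u' u'') := by
  set S := Finset.univ.filter (fun σ : Equiv.Perm (Fin (k + m)) =>
          stdList ((permList σ).take k) = permList σ' ∧
          stdList ((permList σ).drop k) = permList σ'') with hS
  funext w
  rw [show (∑ σ ∈ S, Gfun σ (Fin.append u' u'')) w
      = ∑ σ ∈ S, Gfun σ (Fin.append u' u'') w from Finset.sum_apply _ _ _]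
  by_cases wc : w.map Prod.snd = colorList (Fin.append u' u'')
  · have hw : w.length = k + m := by
      have := congrArg List.length wc
      simpa [colorList] using this
    have hL : ncMul (Gfun (α := ℕ) σ' u') (Gfun σ'' u'') w
        = Gfun (α := ℕ) σ' u' (w.take k) * Gfun σ'' u'' (w.drop k) := by
      simp only [ncMul]
      apply Finset.sum_eq_single_of_mem k (Finset.mem_range.mpr (by omega))
      intro j hj hjk
      by_contra hne
      have h1 : Gfun (α := ℕ) σ' u' (w.take j) ≠ 0 := fun h => hne (by rw [h, zero_mul])
      simp only [Gfun] at h1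
      have hcond : (w.take j).map Prod.snd = colorList u' := by
        by_contra hc; exact h1 (if_neg (fun hh => hc hh.2))
      have hlen := congrArg List.length hcond
      simp only [List.length_map, List.length_take, colorList, List.length_finRange, hw] at hlen
      have hj' : j < k + m + 1 := by rw [hw] at hj; exact Finset.mem_range.mp hj
      omega
    have c1 : (w.take k).map Prod.snd = colorList u' := by
      rw [List.map_take, wc, colorList_append, List.take_left' (by simp [colorList])]
    have c2 : (w.drop k).map Prod.snd = colorList u'' := by
      rw [List.map_drop, wc, colorList_append, List.drop_left' (by simp [colorList])]
    obtain ⟨σv, hσv⟩ := exists_stdPerm (w.map Prod.fst) (n := k + m) (by simp [hw])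
    have huniq : ∀ σ : Equiv.Perm (Fin (k + m)),
        (stdList (w.map Prod.fst) = permList σ) ↔ σ = σv := by
      intro σ
      exact ⟨fun h => (permList_inj (hσv.trans h)).symm, fun h => h ▸ hσv.symm⟩
    have hR : ∀ σ ∈ S, Gfun σ (Fin.append u' u'') w = if σ = σv then (1 : ℤ) else 0 := by
      intro σ _
      simp only [Gfun, wc, and_true]
      exact if_congr (huniq σ) rfl rfl
    rw [hL, Finset.sum_congr rfl hR, Finset.sum_ite_eq' S σv (fun _ => (1 : ℤ))]
    have hmem : (σv ∈ S) ↔ (stdList ((w.map Prod.fst).take k) = permList σ' ∧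
        stdList ((w.map Prod.fst).drop k) = permList σ'') := by
      rw [hS, Finset.mem_filter]
      simp only [Finset.mem_univ, true_and]
      rw [hσv, stdList_take, stdList_drop]
    rw [if_congr hmem rfl rfl]
    simp only [Gfun, c1, c2, and_true, List.map_take, List.map_drop]
    by_cases hA : stdList ((w.map Prod.fst).take k) = permList σ'
      <;> by_cases hB : stdList ((w.map Prod.fst).drop k) = permList σ''
      <;> simp [hA, hB]
  · have hR0 : ∀ σ ∈ S, Gfun σ (Fin.append u' u'') w = 0 := by
      intro σ _
      simp only [Gfun]
      exact if_neg (fun h => wc h.2)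
    rw [Finset.sum_congr rfl hR0, Finset.sum_const_zero]
    simp only [ncMul]
    apply Finset.sum_eq_zero
    intro j hj
    by_contra hne
    have h1 : Gfun (α := ℕ) σ' u' (w.take j) ≠ 0 := fun h => hne (by rw [h, zero_mul])
    have h2 : Gfun (α := ℕ) σ'' u'' (w.drop j) ≠ 0 := fun h => hne (by rw [h, mul_zero])
    simp only [Gfun] at h1 h2
    have hc1 : (w.take j).map Prod.snd = colorList u' := by
      by_contra hc; exact h1 (if_neg (fun hh => hc hh.2))
    have hc2 : (w.drop j).map Prod.snd = colorList u'' := by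
      by_contra hc; exact h2 (if_neg (fun hh => hc hh.2))
    exact wc (by rw [colorList_append, ← hc1, ← hc2, ← List.map_append, List.take_append_drop])

end FQAux

namespace FQAux

lemma ncMul_add_left {ℓ : ℕ} (a b y : Series ℕ ℓ) :
    ncMul (a + b) y = ncMul a y + ncMul b y := by
  funext w
  simp [ncMul, add_mul, Finset.sum_add_distrib]

lemma ncMul_add_right {ℓ : ℕ} (x a b : Series ℕ ℓ) :
    ncMul x (a + b) = ncMul x a + ncMul x b := by
  funext w
  simp [ncMul, mul_add, Finset.sum_add_distrib]

lemma ncMul_smul_left {ℓ : ℕ} (c : ℤ) (a y : Series ℕ ℓ) :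
    ncMul (c • a) y = c • ncMul a y := by
  funext w
  simp [ncMul, Finset.mul_sum, mul_assoc]

lemma ncMul_smul_right {ℓ : ℕ} (c : ℤ) (x a : Series ℕ ℓ) :
    ncMul x (c • a) = c • ncMul x a := by
  funext w
  simp [ncMul, Finset.mul_sum, mul_left_comm]

lemma ncMul_zero_left {ℓ : ℕ} (y : Series ℕ ℓ) : ncMul (0 : Series ℕ ℓ) y = 0 := by
  funext w
  simp [ncMul]

lemma ncMul_zero_right {ℓ : ℕ} (x : Series ℕ ℓ) : ncMul x (0 : Series ℕ ℓ) = 0 := by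
  funext w
  simp [ncMul]

end FQAux

/-- the product of two dual free colored quasi-ribbons is the sum
of the `G_{σ, u'·u''}` over the convolution `σ ∈ σ' ∗ σ''`; consequently the
`G_{σ,u}` span a `ℤ`-subalgebra `FQSym^(ℓ)` of `ℤ⟨𝐀⟩` (the span is closed under
the product). -/
theorem stmt_0 (ℓ k m : ℕ) (σ' : Equiv.Perm (Fin k)) (u' : Fin k → Fin ℓ)
    (σ'' : Equiv.Perm (Fin m)) (u'' : Fin m → Fin ℓ) :
    (ncMul (Gfun (α := ℕ) σ' u') (Gfun σ'' u'') =
      ∑ σ ∈ Finset.univ.filter (fun σ : Equiv.Perm (Fin (k + m)) =>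
          stdList ((permList σ).take k) = permList σ' ∧
          stdList ((permList σ).drop k) = permList σ''),
        Gfun σ (Fin.append u' u''))
    ∧ (∀ x y : Series ℕ ℓ,
        x ∈ Submodule.span ℤ {f : Series ℕ ℓ |
          ∃ (n : ℕ) (σ : Equiv.Perm (Fin n)) (u : Fin n → Fin ℓ), f = Gfun σ u} →
        y ∈ Submodule.span ℤ {f : Series ℕ ℓ |
          ∃ (n : ℕ) (σ : Equiv.Perm (Fin n)) (u : Fin n → Fin ℓ), f = Gfun σ u} →
        ncMul x y ∈ Submodule.span ℤ {f : Series ℕ ℓ |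
          ∃ (n : ℕ) (σ : Equiv.Perm (Fin n)) (u : Fin n → Fin ℓ), f = Gfun σ u}) := by
  refine ⟨FQAux.Gmul ℓ k m σ' u' σ'' u'', ?_⟩
  intro x y hx hy
  induction hx using Submodule.span_induction with
  | mem f hf =>
    induction hy using Submodule.span_induction with
    | mem g hg =>
      obtain ⟨n1, σ1, u1, rfl⟩ := hf
      obtain ⟨n2, σ2, u2, rfl⟩ := hg
      rw [FQAux.Gmul]
      exact Submodule.sum_mem _ fun σ _ => Submodule.subset_span ⟨_, σ, _, rfl⟩
    | zero =>
      rw [FQAux.ncMul_zero_right]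
      exact Submodule.zero_mem _
    | add a b _ _ iha ihb =>
      rw [FQAux.ncMul_add_right]
      exact Submodule.add_mem _ iha ihb
    | smul c a _ ih =>
      rw [FQAux.ncMul_smul_right]
      exact Submodule.smul_mem _ c ih
  | zero =>
    rw [FQAux.ncMul_zero_left]
    exact Submodule.zero_mem _
  | add a b _ _ iha ihb =>
    rw [FQAux.ncMul_add_left]
    exact Submodule.add_mem _ iha ihb
  | smul c a _ ih =>
    rw [FQAux.ncMul_smul_left]
    exact Submodule.smul_mem _ c ih
end

section
/- FQSym^(ℓ), equipped with the coproduct Δf(𝐀) := f(𝐀'⊕𝐀'') given by the ordinal sum of two mutually commuting copies of the colored alphabet, is a graded connected bialgebra, hence a Hopf algebra. Explicitly, Δ G_{σ,u} = Σ G_{σ',u'} ⊗ G_{σ'',u''}, the sum being over all pairs of colored permutations (σ',u'), (σ'',u'') such that (σ,u) belongs to the shifted shuffle (σ',u') ⋒ (σ'',u''). -/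
open scoped BigOperators

/-- The list of all shuffles of two words. -/
def shuffleList {α : Type} : List α → List α → List (List α)
  | [], v => [v]
  | a :: u, [] => [a :: u]
  | a :: u, b :: v =>
      ((shuffleList u (b :: v)).map (a :: ·)) ++ ((shuffleList (a :: u) v).map (b :: ·))
  termination_by u v => u.length + v.length

/-- The colored word of a colored permutation `(σ, u)`. -/
def cpWord {n ℓ : ℕ} (σ : Equiv.Perm (Fin n)) (u : Fin n → Fin ℓ) :
    List (ℕ × Fin ℓ) :=
  (List.finRange n).map fun i => ((σ i : ℕ), u i)

/-- Shift the alphabet letters of a colored word by `k` (colors follow their letters). -/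
def shiftW {ℓ : ℕ} (k : ℕ) (w : List (ℕ × Fin ℓ)) : List (ℕ × Fin ℓ) :=
  w.map fun p => (p.1 + k, p.2)

/-- Embedding of the colored alphabet into the first summand of the ordinal sum `𝐀'⊕𝐀''`. -/
def embL {ℓ : ℕ} (p : ℕ × Fin ℓ) : (ℕ ⊕ₗ ℕ) × Fin ℓ := (toLex (Sum.inl p.1), p.2)

/-- Embedding of the colored alphabet into the second summand of the ordinal sum `𝐀'⊕𝐀''`. -/
def embR {ℓ : ℕ} (p : ℕ × Fin ℓ) : (ℕ ⊕ₗ ℕ) × Fin ℓ := (toLex (Sum.inr p.1), p.2)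

set_option linter.unusedSectionVars false


section Std
variable {α : Type} [LinearOrder α]

/-- bridge between list-filter counting and Fin-indexed Finset counting -/
lemma range_filter_card (n : ℕ) (p : ℕ → Prop) [DecidablePred p] :
    ((List.range n).filter fun j => decide (p j)).length
      = (Finset.univ.filter fun j : Fin n => p j).card := by
  have h1 : ((List.range n).filter fun j => decide (p j)).length
      = ((Finset.range n).filter p).card := by
    simp [Finset.filter, Finset.range, Multiset.range, Finset.card]
  rw [h1]
  refine Finset.card_bij' (fun a ha => ⟨a, Finset.mem_range.1 (Finset.mem_filter.1 ha).1⟩)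
    (fun a _ => (a : ℕ)) ?_ ?_ ?_ ?_ <;> simp_all

/-- the comparison key of a position -/
def lkey (v : List α) (i : Fin v.length) : Lex (α × ℕ) := toLex (v.get i, (i : ℕ))

lemma lkey_lt_iff {v : List α} {i j : Fin v.length} :
    lkey v j < lkey v i ↔ (v.get j < v.get i ∨ (v.get j = v.get i ∧ (j : ℕ) < i)) :=
  Prod.Lex.lt_iff

lemma lkey_injective (v : List α) : Function.Injective (lkey v) := by
  intro i j h
  have : ((v.get i, (i : ℕ)) : α × ℕ) = (v.get j, (j : ℕ)) := toLex.injective h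
  exact Fin.ext (congrArg Prod.snd this)

/-- the rank of a position -/
def rk (v : List α) (i : Fin v.length) : ℕ :=
  (Finset.univ.filter fun j : Fin v.length => lkey v j < lkey v i).card

lemma rk_lt_rk_iff {v : List α} {i j : Fin v.length} :
    rk v j < rk v i ↔ lkey v j < lkey v i := by
  constructor
  · intro h
    by_contra hn
    have hle : lkey v i ≤ lkey v j := not_lt.1 hn
    have : rk v i ≤ rk v j :=
      Finset.card_le_card (fun l hl => by
        simp only [Finset.mem_filter, Finset.mem_univ, true_and] at hl ⊢
        exact lt_of_lt_of_le hl hle)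
    omega
  · intro h
    refine Finset.card_lt_card ⟨fun l hl => ?_, fun hsub => ?_⟩
    · simp only [Finset.mem_filter, Finset.mem_univ, true_and] at hl ⊢
      exact lt_trans hl h
    · have := hsub (by simp only [Finset.mem_filter, Finset.mem_univ, true_and]; exact h :
        j ∈ Finset.univ.filter fun l => lkey v l < lkey v i)
      simp only [Finset.mem_filter, Finset.mem_univ, true_and] at this
      exact lt_irrefl _ this

lemma rk_injective (v : List α) : Function.Injective (rk v) := by
  intro i j h
  rcases lt_trichotomy (lkey v i) (lkey v j) with hl | hl | hl
  · exact absurd (rk_lt_rk_iff.2 hl) (by omega)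
  · exact lkey_injective v hl
  · exact absurd (rk_lt_rk_iff.2 hl) (by omega)

lemma rk_lt_length (v : List α) (i : Fin v.length) : rk v i < v.length := by
  have : (Finset.univ.filter fun j : Fin v.length => lkey v j < lkey v i) ≠ Finset.univ := by
    intro h
    have : i ∈ Finset.univ.filter fun j : Fin v.length => lkey v j < lkey v i := by
      rw [h]; exact Finset.mem_univ i
    simp only [Finset.mem_filter, Finset.mem_univ, true_and] at this
    exact lt_irrefl _ this
  simpa [rk] using (Finset.card_lt_iff_ne_univ _).2 this

@[simp] lemma stdList_length (v : List α) : (stdList v).length = v.length := by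
  simp [stdList]

lemma stdList_getElem (v : List α) (i : ℕ) (h : i < (stdList v).length) :
    (stdList v)[i] = rk v ⟨i, by simpa using h⟩ := by
  have hv : i < v.length := by simpa using h
  unfold stdList
  erw [List.getElem_mapIdx]
  have : ((List.range v.length).filter fun j =>
        v.getD j (v[i]) < v[i] ∨ (v.getD j (v[i]) = v[i] ∧ j < i)).length
      = ((List.range v.length).filter fun j =>
        decide (v.getD j (v[i]) < v[i] ∨ (v.getD j (v[i]) = v[i] ∧ j < i))).length := rfl
  rw [this, range_filter_card v.length
    (fun j => v.getD j (v[i]) < v[i] ∨ (v.getD j (v[i]) = v[i] ∧ j < i))]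
  unfold rk
  congr 1
  apply Finset.filter_congr
  intro j _
  have hj : (j : ℕ) < v.length := j.isLt
  rw [List.getD_eq_getElem v _ hj]
  simp only [lkey_lt_iff]
  constructor
  · rintro (h1 | ⟨h1, h2⟩)
    · exact Or.inl h1
    · exact Or.inr ⟨h1, h2⟩
  · rintro (h1 | ⟨h1, h2⟩)
    · exact Or.inl h1
    · exact Or.inr ⟨h1, h2⟩

end Std


section Std2
variable {α : Type} [LinearOrder α] {β : Type} [LinearOrder β]

lemma card_filter_cast {a b : ℕ} (h : a = b) (p : Fin b → Prop) [DecidablePred p] :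
    (Finset.univ.filter fun j : Fin b => p j).card
      = (Finset.univ.filter fun j : Fin a => p (Fin.cast h j)).card := by
  subst h; rfl

lemma stdList_congr (v : List α) (w : List β) (hl : v.length = w.length)
    (hp : ∀ (i j : ℕ) (hi : i < v.length) (hj : j < v.length),
      (v[j] < v[i] ∨ (v[j] = v[i] ∧ j < i)) ↔
      (w[j]'(hl ▸ hj) < w[i]'(hl ▸ hi) ∨ (w[j]'(hl ▸ hj) = w[i]'(hl ▸ hi) ∧ j < i))) :
    stdList v = stdList w := by
  apply List.ext_getElem (by simp [hl])
  intro i h1 h2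
  rw [stdList_getElem v i h1, stdList_getElem w i h2]
  unfold rk
  rw [card_filter_cast hl (fun j : Fin w.length => lkey w j < lkey w ⟨i, by simpa using h2⟩)]
  congr 1
  apply Finset.filter_congr
  intro j _
  simp only [lkey_lt_iff, List.get_eq_getElem, Fin.coe_cast]
  exact hp i (j : ℕ) (by simpa using h1) j.isLt

/-- the pattern of `stdList v` is the pattern of `v` -/
lemma stdList_pattern (v : List α) (i j : ℕ) (hi : i < v.length) (hj : j < v.length) :
    ((stdList v)[j]'(by simpa using hj) < (stdList v)[i]'(by simpa using hi) ∨
      ((stdList v)[j]'(by simpa using hj) = (stdList v)[i]'(by simpa using hi) ∧ j < i)) ↔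
    (v[j] < v[i] ∨ (v[j] = v[i] ∧ j < i)) := by
  rw [stdList_getElem v i, stdList_getElem v j]
  have h1 : rk v ⟨j, hj⟩ < rk v ⟨i, hi⟩ ↔ _ := rk_lt_rk_iff
  rw [h1, lkey_lt_iff]
  simp only [List.get_eq_getElem]
  constructor
  · rintro (h | ⟨h, h2⟩)
    · exact h
    · have := rk_injective v h
      have hji : j = i := congrArg Fin.val this
      omega
  · intro h; exact Or.inl h

lemma stdList_take (v : List α) (k : ℕ) :
    stdList (v.take k) = stdList ((stdList v).take k) := by
  refine stdList_congr _ _ (by simp) ?_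
  intro i j hi hj
  have hi' : i < v.length := lt_of_lt_of_le hi (by simp [List.length_take])
  have hj' : j < v.length := lt_of_lt_of_le hj (by simp [List.length_take])
  rw [List.getElem_take, List.getElem_take, List.getElem_take, List.getElem_take]
  exact (stdList_pattern v i j hi' hj').symm

lemma stdList_drop (v : List α) (k : ℕ) :
    stdList (v.drop k) = stdList ((stdList v).drop k) := by
  refine stdList_congr _ _ (by simp) ?_
  intro i j hi hj
  have hi' : k + i < v.length := by simp [List.length_drop] at hi; omega
  have hj' : k + j < v.length := by simp [List.length_drop] at hj; omega
  rw [List.getElem_drop, List.getElem_drop, List.getElem_drop, List.getElem_drop]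
  have key := (stdList_pattern v (k + i) (k + j) hi' hj').symm
  constructor
  · rintro (h | ⟨h, h2⟩)
    · exact (key.1 (Or.inl h)).imp id (fun ⟨a, b⟩ => ⟨a, by omega⟩)
    · exact (key.1 (Or.inr ⟨h, by omega⟩)).imp id (fun ⟨a, b⟩ => ⟨a, by omega⟩)
  · rintro (h | ⟨h, h2⟩)
    · exact (key.2 (Or.inl h)).imp id (fun ⟨a, b⟩ => ⟨a, by omega⟩)
    · exact (key.2 (Or.inr ⟨h, by omega⟩)).imp id (fun ⟨a, b⟩ => ⟨a, by omega⟩)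

lemma stdList_nodup (v : List α) : (stdList v).Nodup := by
  rw [List.nodup_iff_injective_get]
  intro i j h
  simp only [List.get_eq_getElem] at h
  rw [stdList_getElem, stdList_getElem] at h
  have h3 := rk_injective v h
  simp only [Fin.mk.injEq] at h3
  exact Fin.ext h3

lemma stdList_perm_range (v : List α) :
    (stdList v).Perm (List.range v.length) := by
  refine List.Subperm.perm_of_length_le ?_ (by simp)
  refine List.subperm_of_subset (stdList_nodup v) ?_
  intro x hx
  rw [List.mem_iff_getElem] at hx
  obtain ⟨i, hi, rfl⟩ := hx
  rw [stdList_getElem]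
  simpa using rk_lt_length v _

/-- characterization: if `t` is order-isomorphic to `v` (with position tie-break)
and `t` is a permutation of `range`, then `t` is the standardization of `v`. -/
lemma stdList_eq_of_pattern (v : List α) (t : List ℕ) (hl : t.length = v.length)
    (hperm : t.Perm (List.range v.length))
    (hp : ∀ (i j : ℕ) (hi : i < v.length) (hj : j < v.length),
      t[j]'(hl ▸ hj) < t[i]'(hl ▸ hi) ↔ (v[j] < v[i] ∨ (v[j] = v[i] ∧ j < i))) :
    stdList v = t := by
  apply List.ext_getElem (by simp [hl])
  intro i h1 h2
  rw [stdList_getElem v i h1]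
  have hi : i < v.length := by simpa using h1
  have hmemt : ∀ x, x ∈ t ↔ x < v.length := by
    intro x
    rw [hperm.mem_iff, List.mem_range]
  set c := t[i]'h2 with hc
  have hcn : c < v.length := (hmemt c).1 (List.getElem_mem h2)
  -- rk v ⟨i, hi⟩ = card{j : Fin t.length | t.get j < c}
  have step1 : rk v ⟨i, hi⟩
      = (Finset.univ.filter fun j : Fin t.length => t.get j < c).card := by
    unfold rk
    rw [card_filter_cast hl (fun j : Fin v.length => lkey v j < lkey v ⟨i, hi⟩)]
    congr 1
    apply Finset.filter_congr
    intro j _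
    simp only [lkey_lt_iff, List.get_eq_getElem, Fin.coe_cast]
    rw [hp i (j : ℕ) hi (by have := j.isLt; omega)]
  rw [step1]
  -- now count by pushing along the injective map t.get
  have hinj : Function.Injective t.get :=
    List.nodup_iff_injective_get.1 (hperm.nodup_iff.2 List.nodup_range)
  have himg : Finset.univ.image t.get = Finset.range v.length := by
    ext x
    simp only [Finset.mem_image, Finset.mem_univ, true_and, Finset.mem_range]
    rw [← hmemt x, List.mem_iff_get]
  calc (Finset.univ.filter fun j : Fin t.length => t.get j < c).card
      = ((Finset.univ.filter fun j : Fin t.length => t.get j < c).image t.get).card :=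
        (Finset.card_image_of_injective _ hinj).symm
    _ = ((Finset.univ.image t.get).filter (· < c)).card := by rw [Finset.filter_image]
    _ = ((Finset.range v.length).filter (· < c)).card := by rw [himg]
    _ = c := by
        have : (Finset.range v.length).filter (· < c) = Finset.range c := by
          ext x; simp only [Finset.mem_filter, Finset.mem_range]; omega
        rw [this, Finset.card_range]

end Std2




section PermListLemmas
variable {ℓ n : ℕ}

@[simp] lemma permList_length (σ : Equiv.Perm (Fin n)) : (permList σ).length = n := by
  simp [permList]

lemma permList_getElem (σ : Equiv.Perm (Fin n)) (i : ℕ) (h : i < (permList σ).length) :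
    (permList σ)[i] = (σ ⟨i, by simpa using h⟩ : ℕ) := by
  simp [permList]

@[simp] lemma colorList_length (u : Fin n → Fin ℓ) : (colorList u).length = n := by
  simp [colorList]

lemma colorList_getElem (u : Fin n → Fin ℓ) (i : ℕ) (h : i < (colorList u).length) :
    (colorList u)[i] = u ⟨i, by simpa using h⟩ := by
  simp [colorList]

lemma permList_injective : Function.Injective (permList (n := n)) := by
  intro σ τ h
  ext i
  have h1 : ((i : ℕ)) < (permList σ).length := by simp
  have h2 : ((i : ℕ)) < (permList τ).length := by simp
  have e : (permList σ)[(i : ℕ)]'h1 = (permList τ)[(i : ℕ)]'h2 := by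
    simp only [h]
  rw [permList_getElem _ _ h1, permList_getElem _ _ h2] at e
  simpa using e

lemma colorList_injective : Function.Injective (colorList (n := n) (ℓ := ℓ)) := by
  intro u u' h
  funext i
  have h1 : ((i : ℕ)) < (colorList u).length := by simp
  have h2 : ((i : ℕ)) < (colorList u').length := by simp
  have e : (colorList u)[(i : ℕ)]'h1 = (colorList u')[(i : ℕ)]'h2 := by
    simp only [h]
  rw [colorList_getElem _ _ h1, colorList_getElem _ _ h2] at e
  simpa using e

@[simp] lemma cpWord_length (σ : Equiv.Perm (Fin n)) (u : Fin n → Fin ℓ) :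
    (cpWord σ u).length = n := by simp [cpWord]

lemma cpWord_map_fst (σ : Equiv.Perm (Fin n)) (u : Fin n → Fin ℓ) :
    (cpWord σ u).map Prod.fst = permList σ := by
  simp [cpWord, permList, List.map_map]

lemma cpWord_map_snd (σ : Equiv.Perm (Fin n)) (u : Fin n → Fin ℓ) :
    (cpWord σ u).map Prod.snd = colorList u := by
  simp [cpWord, colorList, List.map_map]

lemma pairlist_ext {γ δ : Type*} {l₁ l₂ : List (γ × δ)}
    (h1 : l₁.map Prod.fst = l₂.map Prod.fst) (h2 : l₁.map Prod.snd = l₂.map Prod.snd) :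
    l₁ = l₂ := by
  have hl : l₁.length = l₂.length := by
    have := congrArg List.length h1; simpa using this
  apply List.ext_getElem hl
  intro i hi1 hi2
  have e1 : (l₁.map Prod.fst)[i]'(by simpa using hi1) = (l₂.map Prod.fst)[i]'(by simpa using hi2) := by
    simp only [h1]
  have e2 : (l₁.map Prod.snd)[i]'(by simpa using hi1) = (l₂.map Prod.snd)[i]'(by simpa using hi2) := by
    simp only [h2]
  simp only [List.getElem_map] at e1 e2
  exact Prod.ext e1 e2

lemma colorList_append {k m : ℕ} (u' : Fin k → Fin ℓ) (u'' : Fin m → Fin ℓ) :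
    colorList (Fin.append u' u'') = colorList u' ++ colorList u'' := by
  apply List.ext_getElem (by simp)
  intro i h1 h2
  rw [colorList_getElem _ i h1]
  rcases lt_or_ge i k with hik | hik
  · rw [List.getElem_append_left (by simpa using hik)]
    rw [colorList_getElem _ i (by simpa using hik)]
    have : (⟨i, by simpa using h1⟩ : Fin (k + m)) = Fin.castAdd m ⟨i, hik⟩ := rfl
    rw [this, Fin.append_left]
  · rw [List.getElem_append_right (by simpa using hik)]
    have him : i - k < m := by simp at h1; omega
    rw [colorList_getElem _ _ (by simpa using him)]
    have : (⟨i, by simpa using h1⟩ : Fin (k + m)) = Fin.natAdd k ⟨i - k, him⟩ := by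
      apply Fin.ext; simp; omega
    rw [this, Fin.append_right]
    congr 1
    simp

end PermListLemmas

section StdPerm
variable {α : Type} [LinearOrder α] {ℓ : ℕ}

noncomputable def stdPerm (v : List α) : Equiv.Perm (Fin v.length) :=
  Equiv.ofBijective (fun i => ⟨rk v i, rk_lt_length v i⟩)
    (Finite.injective_iff_bijective.1 (fun i j h => rk_injective v (by
      simpa [Fin.mk.injEq] using congrArg Fin.val h)))

lemma permList_stdPerm (v : List α) : permList (stdPerm v) = stdList v := by
  apply List.ext_getElem (by simp)
  intro i h1 h2
  rw [permList_getElem _ i h1, stdList_getElem v i h2]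
  rfl

lemma permCongr_permList {a b : ℕ} (h : a = b) (τ : Equiv.Perm (Fin a)) :
    permList ((finCongr h).permCongr τ) = permList τ := by
  subst h
  have : (finCongr rfl).permCongr τ = τ := by ext i; simp
  rw [this]

lemma cpWord_congr {ℓ a b : ℕ} (h : a = b) (τ : Equiv.Perm (Fin a)) (u : Fin a → Fin ℓ) :
    cpWord ((finCongr h).permCongr τ) (u ∘ (finCongr h).symm) = cpWord τ u := by
  subst h
  have h1 : (finCongr rfl).permCongr τ = τ := by ext i; simp
  have h2 : u ∘ (finCongr (rfl : a = a)).symm = u := by funext i; simp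
  rw [h1, h2]

/-- canonical standardization permutation of a colored word -/
noncomputable def wPerm (w : List (α × Fin ℓ)) : Equiv.Perm (Fin w.length) :=
  (finCongr (by simp : (w.map Prod.fst).length = w.length)).permCongr (stdPerm (w.map Prod.fst))

/-- canonical colors of a colored word -/
def wCol (w : List (α × Fin ℓ)) : Fin w.length → Fin ℓ := fun i => (w.get i).2

lemma permList_wPerm (w : List (α × Fin ℓ)) :
    permList (wPerm w) = stdList (w.map Prod.fst) := by
  rw [wPerm, permCongr_permList, permList_stdPerm]

lemma colorList_wCol (w : List (α × Fin ℓ)) :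
    colorList (wCol w) = w.map Prod.snd := by
  apply List.ext_getElem (by simp)
  intro i h1 h2
  rw [colorList_getElem _ i h1]
  simp [wCol]

end StdPerm


section Shuffle
variable {α : Type} {γ : Type}

lemma perm_of_mem_shuffleList :
    ∀ (u v : List α), ∀ s ∈ shuffleList u v, s.Perm (u ++ v) := by
  intro u v
  induction u, v using shuffleList.induct with
  | case1 v => intro s hs; simp [shuffleList] at hs; subst hs; simp
  | case2 a u => intro s hs; simp [shuffleList] at hs; subst hs; simp
  | case3 a u b v ih1 ih2 =>
    intro s hs
    rw [shuffleList] at hs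
    rcases List.mem_append.1 hs with h | h
    · obtain ⟨t, ht, rfl⟩ := List.mem_map.1 h
      exact ((ih1 t ht).cons a).trans (by simp)
    · obtain ⟨t, ht, rfl⟩ := List.mem_map.1 h
      refine ((ih2 t ht).cons b).trans ?_
      refine List.Perm.trans ?_ (List.perm_middle).symm
      exact List.Perm.refl _

lemma length_of_mem_shuffleList {u v : List α} {s : List α} (hs : s ∈ shuffleList u v) :
    s.length = u.length + v.length := by
  simpa using (perm_of_mem_shuffleList u v s hs).length_eq

lemma shuffleList_map (f : α → γ) :
    ∀ (u v : List α), shuffleList (u.map f) (v.map f) = (shuffleList u v).map (List.map f) := by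
  intro u v
  induction u, v using shuffleList.induct with
  | case1 v => simp [shuffleList]
  | case2 a u => simp [shuffleList]
  | case3 a u b v ih1 ih2 =>
    rw [List.map_cons, List.map_cons, shuffleList, shuffleList, ← List.map_cons (f := f) (a := a) (l := u),
      ← List.map_cons (f := f) (a := b) (l := v), ih1, ih2]
    rw [List.map_append, List.map_map, List.map_map, List.map_map, List.map_map]
    simp [Function.comp_def]

lemma pairwise_of_mem_shuffleList {Q : α → α → Prop} :
    ∀ (u v : List α), List.Pairwise Q u → List.Pairwise Q v →
      (∀ x ∈ u, ∀ y ∈ v, Q x y ∧ Q y x) →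
      ∀ s ∈ shuffleList u v, List.Pairwise Q s := by
  intro u v
  induction u, v using shuffleList.induct with
  | case1 v => intro _ hv _ s hs; simp [shuffleList] at hs; subst hs; exact hv
  | case2 a u => intro hu _ _ s hs; simp [shuffleList] at hs; subst hs; exact hu
  | case3 a u b v ih1 ih2 =>
    intro hu hv hc s hs
    rw [shuffleList] at hs
    rcases List.mem_append.1 hs with h | h
    · obtain ⟨t, ht, rfl⟩ := List.mem_map.1 h
      have hperm := perm_of_mem_shuffleList _ _ t ht
      refine List.Pairwise.cons ?_ (ih1 (List.Pairwise.of_cons hu) hv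
        (fun x hx y hy => hc x (by simp [hx]) y hy) t ht)
      intro z hz
      rcases List.mem_append.1 ((hperm.mem_iff).1 hz) with hz' | hz'
      · exact (List.pairwise_cons.1 hu).1 z hz'
      · exact (hc a (by simp) z hz').1
    · obtain ⟨t, ht, rfl⟩ := List.mem_map.1 h
      have hperm := perm_of_mem_shuffleList _ _ t ht
      refine List.Pairwise.cons ?_ (ih2 hu (List.Pairwise.of_cons hv)
        (fun x hx y hy => hc x hx y (by simp [hy])) t ht)
      intro z hz
      rcases List.mem_append.1 ((hperm.mem_iff).1 hz) with hz' | hz'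
      · exact (hc z hz' b (by simp)).2
      · exact (List.pairwise_cons.1 hv).1 z hz'

lemma nodup_shuffleList :
    ∀ (u v : List α), (∀ x ∈ u, ∀ y ∈ v, x ≠ y) →
      (shuffleList u v).Nodup := by
  intro u v
  induction u, v using shuffleList.induct with
  | case1 v => intro _; simp [shuffleList]
  | case2 a u => intro _; simp [shuffleList]
  | case3 a u b v ih1 ih2 =>
    intro h
    rw [shuffleList]
    refine List.Nodup.append ?_ ?_ ?_
    · exact (ih1 (fun x hx y hy => h x (by simp [hx]) y hy)).map
        (fun s t hst => by simpa using hst)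
    · exact (ih2 (fun x hx y hy => h x hx y (by simp [hy]))).map
        (fun s t hst => by simpa using hst)
    · intro s hs1 hs2
      obtain ⟨t1, _, rfl⟩ := List.mem_map.1 hs1
      obtain ⟨t2, _, heq⟩ := List.mem_map.1 hs2
      have hab : a ≠ b := h a (by simp) b (by simp)
      exact hab (by injection heq.symm)

end Shuffle




section GfunLemmas
variable {α : Type} [LinearOrder α] {ℓ n : ℕ}

lemma Gfun_eq_zero_of_length_ne (σ : Equiv.Perm (Fin n)) (u : Fin n → Fin ℓ)
    (w : List (α × Fin ℓ)) (h : w.length ≠ n) : Gfun σ u w = 0 := by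
  rw [Gfun, if_neg]
  rintro ⟨h1, h2⟩
  exact h (by simpa using congrArg List.length h2)

lemma sum_map_indicator {X : Type*} [DecidableEq X] (L : List X) (x : X) :
    (L.map fun y => if y = x then (1 : ℤ) else 0).sum = L.count x := by
  induction L with
  | nil => simp
  | cons a L ih =>
    rw [List.map_cons, List.sum_cons, ih, List.count_cons]
    by_cases h : a = x <;> simp [h] <;> ring

lemma sum_map_indicator_zero {X : Type*} [DecidableEq X] (L : List X) (x : X)
    (hx : x ∉ L) : (L.map fun y => if y = x then (1 : ℤ) else 0).sum = 0 := by
  induction L with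
  | nil => simp
  | cons a L ih =>
    rw [List.map_cons, List.sum_cons, if_neg (fun h => hx (by simp [h])),
      ih (fun h => hx (by simp [h])), add_zero]

lemma sum_map_indicator_nodup {X : Type*} [DecidableEq X] (L : List X) (hN : L.Nodup)
    (x : X) : (L.map fun y => if y = x then (1 : ℤ) else 0).sum
      = if x ∈ L then 1 else 0 := by
  induction L with
  | nil => simp
  | cons a L ih =>
    rw [List.map_cons, List.sum_cons]
    by_cases h : a = x
    · subst h
      rw [if_pos rfl, if_pos (by simp), sum_map_indicator_zero L a
        (List.nodup_cons.1 hN).1, add_zero]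
    · rw [if_neg h, zero_add, ih (List.nodup_cons.1 hN).2]
      by_cases hx : x ∈ L
      · rw [if_pos hx, if_pos (by simp [hx])]
      · rw [if_neg hx, if_neg (by simp [h, hx]; exact fun hc => h hc.symm)]

end GfunLemmas

section Part2
variable {α : Type} [LinearOrder α] {ℓ : ℕ}

theorem part2 (k m : ℕ) (σ' : Equiv.Perm (Fin k)) (u' : Fin k → Fin ℓ)
    (σ'' : Equiv.Perm (Fin m)) (u'' : Fin m → Fin ℓ) :
    ncMul (Gfun (α := α) σ' u') (Gfun σ'' u'') =
      ∑ τ ∈ Finset.univ.filter (fun τ : Equiv.Perm (Fin (k + m)) =>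
          stdList ((permList τ).take k) = permList σ' ∧
          stdList ((permList τ).drop k) = permList σ''),
        Gfun τ (Fin.append u' u'') := by
  funext w
  rw [Finset.sum_apply]
  -- Step A : collapse the ncMul sum to the term j = k
  have stepA : ncMul (Gfun (α := α) σ' u') (Gfun σ'' u'') w
      = Gfun σ' u' (w.take k) * Gfun σ'' u'' (w.drop k) := by
    rw [ncMul]
    apply Finset.sum_eq_single
    · intro b hb hbk
      have hb' : b ≤ w.length := by simpa using Nat.lt_succ_iff.1 (Finset.mem_range.1 hb)
      have : (w.take b).length ≠ k := by
        rw [List.length_take]; omega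
      rw [Gfun_eq_zero_of_length_ne _ _ _ this, zero_mul]
    · intro hk
      have hk' : w.length < k := by
        by_contra hcon
        exact hk (Finset.mem_range.2 (by omega))
      have : (w.take k).length ≠ k := by
        rw [List.length_take]; omega
      rw [Gfun_eq_zero_of_length_ne _ _ _ this, zero_mul]
  rw [stepA]
  by_cases hw : w.length = k + m
  case neg =>
    -- both sides are zero
    have hL : Gfun σ' u' (w.take k) * Gfun σ'' u'' (w.drop k) = 0 := by
      rcases lt_or_ge w.length k with h | h
      · rw [Gfun_eq_zero_of_length_ne _ _ _ (by rw [List.length_take]; omega), zero_mul]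
      · rw [Gfun_eq_zero_of_length_ne σ'' _ _ (by rw [List.length_drop]; omega), mul_zero]
    rw [hL]
    exact (Finset.sum_eq_zero fun τ _ => Gfun_eq_zero_of_length_ne _ _ _ hw).symm
  case pos =>
    set v := w.map Prod.fst with hvdef
    have hv : v.length = k + m := by rw [hvdef, List.length_map]; exact hw
    set τ₀ : Equiv.Perm (Fin (k + m)) := (finCongr hv).permCongr (stdPerm v) with hτ₀
    have hpt : permList τ₀ = stdList v := by
      rw [hτ₀, permCongr_permList, permList_stdPerm]
    -- uniqueness : if Gfun τ w ≠ 0 then τ = τ₀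
    have huniq : ∀ τ : Equiv.Perm (Fin (k + m)), stdList v = permList τ → τ = τ₀ := by
      intro τ h
      exact permList_injective (h.symm.trans hpt.symm)
    -- letter conditions transfer
    have htake : stdList ((w.take k).map Prod.fst) = stdList ((permList τ₀).take k) := by
      rw [List.map_take, ← hvdef, hpt]
      exact stdList_take v k
    have hdrop : stdList ((w.drop k).map Prod.fst) = stdList ((permList τ₀).drop k) := by
      rw [List.map_drop, ← hvdef, hpt]
      exact stdList_drop v k
    -- color condition split
    have hcolor : ((w.take k).map Prod.snd = colorList u' ∧
        (w.drop k).map Prod.snd = colorList u'') ↔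
        w.map Prod.snd = colorList (Fin.append u' u'') := by
      rw [colorList_append, List.map_take, List.map_drop]
      constructor
      · rintro ⟨h1, h2⟩
        rw [← h1, ← h2, List.take_append_drop]
      · intro h
        have hlen : (colorList u' (n := k)).length = k := by simp
        constructor
        · rw [h, List.take_append, List.take_of_length_le (by simp), hlen]
          simp
        · rw [h, List.drop_append, List.drop_of_length_le (by simp), hlen]
          simp
    by_cases hf : stdList ((permList τ₀).take k) = permList σ' ∧
        stdList ((permList τ₀).drop k) = permList σ''
    case pos =>
      have hmem : τ₀ ∈ Finset.univ.filter (fun τ : Equiv.Perm (Fin (k + m)) =>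
          stdList ((permList τ).take k) = permList σ' ∧
          stdList ((permList τ).drop k) = permList σ'') := by
        simp only [Finset.mem_filter, Finset.mem_univ, true_and]; exact hf
      rw [Finset.sum_eq_single_of_mem τ₀ hmem]
      · -- pointwise equality of the two indicators
        rw [Gfun, Gfun, Gfun]
        have e1 : stdList ((w.take k).map Prod.fst) = permList σ' := htake.trans hf.1
        have e2 : stdList ((w.drop k).map Prod.fst) = permList σ'' := hdrop.trans hf.2
        have e3 : stdList (w.map Prod.fst) = permList τ₀ := hpt.symm
        by_cases hc : w.map Prod.snd = colorList (Fin.append u' u'')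
        · rw [if_pos ⟨e1, (hcolor.2 hc).1⟩, if_pos ⟨e2, (hcolor.2 hc).2⟩, if_pos ⟨e3, hc⟩]
          norm_num
        · by_cases hc1 : (w.take k).map Prod.snd = colorList u'
          · have hc2 : ¬ ((w.drop k).map Prod.snd = colorList u'') :=
              fun hcon => hc (hcolor.1 ⟨hc1, hcon⟩)
            rw [if_pos ⟨e1, hc1⟩, if_neg (fun hcon : _ ∧ _ => hc2 hcon.2),
              if_neg (fun hcon : _ ∧ _ => hc hcon.2)]
            norm_num
          · rw [if_neg (fun hcon : _ ∧ _ => hc1 hcon.2),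
              if_neg (fun hcon : _ ∧ _ => hc hcon.2), zero_mul]
      · intro τ hτ hne
        rw [Gfun, if_neg]
        rintro ⟨h1, _⟩
        exact hne (huniq τ h1)
    case neg =>
      -- RHS is zero
      have hR : ∀ τ ∈ Finset.univ.filter (fun τ : Equiv.Perm (Fin (k + m)) =>
          stdList ((permList τ).take k) = permList σ' ∧
          stdList ((permList τ).drop k) = permList σ''),
          Gfun τ (Fin.append u' u'') w = 0 := by
        intro τ hτ
        simp only [Finset.mem_filter, Finset.mem_univ, true_and] at hτ
        rw [Gfun, if_neg]
        rintro ⟨h1, _⟩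
        exact hf (by rw [huniq τ h1] at hτ; exact hτ)
      rw [Finset.sum_eq_zero hR]
      -- LHS is zero
      by_cases hc1 : stdList ((w.take k).map Prod.fst) = permList σ'
      · by_cases hc2 : stdList ((w.drop k).map Prod.fst) = permList σ''
        · exact absurd ⟨htake.symm.trans hc1, hdrop.symm.trans hc2⟩ hf
        · have h0 : Gfun (α := α) σ'' u'' (w.drop k) = 0 := by
            rw [Gfun, if_neg (fun hcon : _ ∧ _ => hc2 hcon.1)]
          rw [h0, mul_zero]
      · have h0 : Gfun (α := α) σ' u' (w.take k) = 0 := by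
          rw [Gfun, if_neg (fun hcon : _ ∧ _ => hc1 hcon.1)]
        rw [h0, zero_mul]

end Part2




section Part1Support
variable {α : Type} [LinearOrder α] {ℓ n : ℕ}

@[simp] lemma shiftW_length (k : ℕ) (w : List (ℕ × Fin ℓ)) :
    (shiftW k w).length = w.length := by simp [shiftW]

lemma shiftW_map_fst (k : ℕ) (w : List (ℕ × Fin ℓ)) :
    (shiftW k w).map Prod.fst = (w.map Prod.fst).map (· + k) := by
  simp [shiftW, List.map_map]

lemma shiftW_map_snd (k : ℕ) (w : List (ℕ × Fin ℓ)) :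
    (shiftW k w).map Prod.snd = w.map Prod.snd := by
  simp [shiftW, List.map_map]

lemma cpWord_getElem (σ : Equiv.Perm (Fin n)) (u : Fin n → Fin ℓ) (i : ℕ)
    (h : i < (cpWord σ u).length) :
    (cpWord σ u)[i] = ((σ ⟨i, by simpa using h⟩ : ℕ), u ⟨i, by simpa using h⟩) := by
  simp [cpWord]

lemma colorList_congr {a b : ℕ} (h : a = b) (u : Fin a → Fin ℓ) :
    colorList (u ∘ (finCongr h).symm) = colorList u := by
  subst h
  have : u ∘ (finCongr (rfl : a = a)).symm = u := by funext i; simp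
  rw [this]

lemma stdList_mem_lt (v : List α) {x : ℕ} (hx : x ∈ stdList v) : x < v.length := by
  have := (stdList_perm_range v).mem_iff.1 hx
  simpa using this

/-- both comparison directions between standardized entries, positions `i < j` -/
lemma std_lt_iff (v : List α) {i j : ℕ} (hi : i < v.length) (hj : j < v.length)
    (hij : i < j) :
    ((stdList v)[i]'(by simpa using hi) < (stdList v)[j]'(by simpa using hj) ↔
      (v[i] < v[j] ∨ v[i] = v[j])) ∧
    ((stdList v)[j]'(by simpa using hj) < (stdList v)[i]'(by simpa using hi) ↔
      v[j] < v[i]) := by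
  constructor
  · have h1 := stdList_pattern v j i hj hi
    constructor
    · intro h
      have := h1.1 (Or.inl h)
      rcases this with h' | ⟨h', _⟩
      · exact Or.inl h'
      · exact Or.inr h'
    · intro h
      rcases h1.2 (by rcases h with h' | h' <;> [exact Or.inl h'; exact Or.inr ⟨h', hij⟩])
        with h' | ⟨h', _⟩
      · exact h'
      · exfalso
        have := (stdList_nodup v).getElem_inj_iff.1 h'
        omega
  · have h1 := stdList_pattern v i j hi hj
    constructor
    · intro h
      rcases h1.1 (Or.inl h) with h' | ⟨_, h2⟩
      · exact h'
      · omega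
    · intro h
      rcases h1.2 (Or.inl h) with h' | ⟨_, h2⟩
      · exact h'
      · omega

end Part1Support

section Crux
variable {ℓ : ℕ}

lemma getElem_shiftW (k : ℕ) (w : List (ℕ × Fin ℓ)) (i : ℕ) (h : i < (shiftW k w).length) :
    (shiftW k w)[i] = ((w[i]'(by simpa using h)).1 + k, (w[i]'(by simpa using h)).2) := by
  simp [shiftW]

/-- the comparison-transport relation carried along shuffles -/
def Qrel (x y : ((ℕ ⊕ₗ ℕ) × Fin ℓ) × (ℕ × Fin ℓ)) : Prop :=
  ((x.2.1 < y.2.1) ↔ (x.1.1 < y.1.1 ∨ x.1.1 = y.1.1)) ∧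
  ((y.2.1 < x.2.1) ↔ (y.1.1 < x.1.1))

lemma crux (n : ℕ) (σ : Equiv.Perm (Fin n)) (u : Fin n → Fin ℓ)
    (w' w'' : List (ℕ × Fin ℓ))
    (e : List (((ℕ ⊕ₗ ℕ) × Fin ℓ) × (ℕ × Fin ℓ)))
    (he : e ∈ shuffleList ((w'.map embL).zip (cpWord (wPerm w') (wCol w')))
      ((w''.map embR).zip (shiftW w'.length (cpWord (wPerm w'') (wCol w''))))) :
    Gfun σ u (e.map Prod.fst) = if e.map Prod.snd = cpWord σ u then 1 else 0 := by
  set v' : List ℕ := w'.map Prod.fst with hv'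
  set v'' : List ℕ := w''.map Prod.fst with hv''
  set k' := w'.length with hk'
  set m' := w''.length with hm'
  set B' : List (ℕ × Fin ℓ) := cpWord (wPerm w') (wCol w') with hB'
  set B'' : List (ℕ × Fin ℓ) := shiftW k' (cpWord (wPerm w'') (wCol w'')) with hB''
  set E' := (w'.map embL).zip B' with hE'
  set E'' := (w''.map embR).zip B'' with hE''
  have hv'len : v'.length = k' := by simp [hv', hk']
  have hv''len : v''.length = m' := by simp [hv'', hm']
  have hB'len : B'.length = k' := by simp [hB', hk']
  have hB''len : B''.length = m' := by simp [hB'', hm']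
  have hE'len : E'.length = k' := by simp [hE', hB', hk']
  have hE''len : E''.length = m' := by simp [hE'', hB'', hm']
  have hB'fst : B'.map Prod.fst = stdList v' := by
    rw [hB', cpWord_map_fst, permList_wPerm, hv']
  have hB'snd : B'.map Prod.snd = w'.map Prod.snd := by
    rw [hB', cpWord_map_snd, colorList_wCol]
  have hB''fst : B''.map Prod.fst = (stdList v'').map (· + k') := by
    rw [hB'', shiftW_map_fst, cpWord_map_fst, permList_wPerm, hv'']
  have hB''snd : B''.map Prod.snd = w''.map Prod.snd := by
    rw [hB'', shiftW_map_snd, cpWord_map_snd, colorList_wCol]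
  -- getElem descriptions of E' and E''
  have hE'get : ∀ (i : ℕ) (h : i < E'.length),
      E'[i] = ((toLex (Sum.inl (v'[i]'(by rw [hv'len]; omega))),
          (w'[i]'(by rw [← hk']; omega : i < w'.length)).2),
        ((stdList v')[i]'(by rw [stdList_length, hv'len]; omega),
          (w'[i]'(by rw [← hk']; omega)).2)) := by
    intro i h
    have hiw : i < w'.length := by rw [← hk']; omega
    have hiB : i < B'.length := by omega
    have hzip : E'[i]'h = ((w'.map embL)[i]'(by simpa [hE'] using hiw), B'[i]'hiB) :=
      List.getElem_zip (h := h)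
    rw [hzip]
    have h1 : (w'.map embL)[i]'(by simpa using hiw) = embL (w'[i]'hiw) := by
      rw [List.getElem_map]
    have h2 : B'[i]'hiB = ((stdList v')[i]'(by rw [stdList_length, hv'len]; omega),
        (w'[i]'hiw).2) := by
      have hfst : (B'[i]'hiB).1 = (B'.map Prod.fst)[i]'(by simpa using hiB) := by
        rw [List.getElem_map]
      have hsnd : (B'[i]'hiB).2 = (B'.map Prod.snd)[i]'(by simpa using hiB) := by
        rw [List.getElem_map]
      refine Prod.ext ?_ ?_
      · rw [hfst]
        have := hB'fst
        simp only [this]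
      · rw [hsnd]
        have := hB'snd
        simp only [this]
        rw [List.getElem_map]
    rw [h1, h2, embL]
    have : (w'[i]'hiw).1 = v'[i]'(by rw [hv'len]; omega) := by
      simp [hv']
    rw [this]
  have hE''get : ∀ (i : ℕ) (h : i < E''.length),
      E''[i] = ((toLex (Sum.inr (v''[i]'(by rw [hv''len]; omega))),
          (w''[i]'(by rw [← hm']; omega : i < w''.length)).2),
        ((stdList v'')[i]'(by rw [stdList_length, hv''len]; omega) + k',
          (w''[i]'(by rw [← hm']; omega)).2)) := by
    intro i h
    have hiw : i < w''.length := by rw [← hm']; omega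
    have hiB : i < B''.length := by omega
    have hzip : E''[i]'h = ((w''.map embR)[i]'(by simpa [hE''] using hiw), B''[i]'hiB) :=
      List.getElem_zip (h := h)
    rw [hzip]
    have h1 : (w''.map embR)[i]'(by simpa using hiw) = embR (w''[i]'hiw) := by
      rw [List.getElem_map]
    have h2 : B''[i]'hiB = ((stdList v'')[i]'(by rw [stdList_length, hv''len]; omega) + k',
        (w''[i]'hiw).2) := by
      have hfst : (B''[i]'hiB).1 = (B''.map Prod.fst)[i]'(by simpa using hiB) := by
        rw [List.getElem_map]
      have hsnd : (B''[i]'hiB).2 = (B''.map Prod.snd)[i]'(by simpa using hiB) := by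
        rw [List.getElem_map]
      refine Prod.ext ?_ ?_
      · rw [hfst]
        simp only [hB''fst]
        rw [List.getElem_map]
      · rw [hsnd]
        simp only [hB''snd]
        rw [List.getElem_map]
    rw [h1, h2, embR]
    have : (w''[i]'hiw).1 = v''[i]'(by rw [hv''len]; omega) := by
      simp [hv'']
    rw [this]
  -- colors agree on both components, elementwise
  have hperm := perm_of_mem_shuffleList _ _ e he
  have hcolE' : ∀ x ∈ E', x.1.2 = x.2.2 := by
    intro x hx
    obtain ⟨i, hi, rfl⟩ := List.mem_iff_getElem.1 hx
    rw [hE'get i hi]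
  have hcolE'' : ∀ x ∈ E'', x.1.2 = x.2.2 := by
    intro x hx
    obtain ⟨i, hi, rfl⟩ := List.mem_iff_getElem.1 hx
    rw [hE''get i hi]
  have hcol : ∀ x ∈ e, x.1.2 = x.2.2 := by
    intro x hx
    rcases List.mem_append.1 (hperm.mem_iff.1 hx) with h | h
    · exact hcolE' x h
    · exact hcolE'' x h
  -- the pairwise comparison-transport relation
  have hQ1 : List.Pairwise Qrel E' := by
    rw [List.pairwise_iff_getElem]
    intro i j hi hj hij
    rw [hE'get i hi, hE'get j hj]
    have hi' : i < v'.length := by rw [hv'len]; omega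
    have hj' : j < v'.length := by rw [hv'len]; omega
    have hstd := std_lt_iff v' hi' hj' hij
    constructor
    · simp only []
      rw [hstd.1]
      simp [Sum.Lex.inl_lt_inl_iff]
    · simp only []
      rw [hstd.2]
      simp [Sum.Lex.inl_lt_inl_iff]
  have hQ2 : List.Pairwise Qrel E'' := by
    rw [List.pairwise_iff_getElem]
    intro i j hi hj hij
    rw [hE''get i hi, hE''get j hj]
    have hi' : i < v''.length := by rw [hv''len]; omega
    have hj' : j < v''.length := by rw [hv''len]; omega
    have hstd := std_lt_iff v'' hi' hj' hij
    constructor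
    · simp only []
      rw [show ((stdList v'')[i]'(by rw [stdList_length]; omega) + k'
          < (stdList v'')[j]'(by rw [stdList_length]; omega) + k')
          ↔ ((stdList v'')[i]'(by rw [stdList_length]; omega)
          < (stdList v'')[j]'(by rw [stdList_length]; omega)) from by omega]
      rw [hstd.1]
      simp [Sum.Lex.inr_lt_inr_iff]
    · simp only []
      rw [show ((stdList v'')[j]'(by rw [stdList_length]; omega) + k'
          < (stdList v'')[i]'(by rw [stdList_length]; omega) + k')
          ↔ ((stdList v'')[j]'(by rw [stdList_length]; omega)
          < (stdList v'')[i]'(by rw [stdList_length]; omega)) from by omega]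
      rw [hstd.2]
      simp [Sum.Lex.inr_lt_inr_iff]
  have hcross : ∀ x ∈ E', ∀ y ∈ E'', Qrel x y ∧ Qrel y x := by
    intro x hx y hy
    obtain ⟨i, hi, rfl⟩ := List.mem_iff_getElem.1 hx
    obtain ⟨j, hj, rfl⟩ := List.mem_iff_getElem.1 hy
    rw [hE'get i hi, hE''get j hj]
    dsimp only [Qrel]
    have h0 : (stdList v')[i]'(by rw [stdList_length, hv'len]; omega) < v'.length :=
      stdList_mem_lt v' (List.getElem_mem _)
    have h1 : (stdList v')[i]'(by rw [stdList_length, hv'len]; omega) < k' := by omega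
    refine ⟨⟨?_, ?_⟩, ⟨?_, ?_⟩⟩
    · exact iff_of_true (by omega) (Or.inl (Sum.Lex.inl_lt_inr _ _))
    · exact iff_of_false (by omega) (by simp)
    · refine iff_of_false (by omega) ?_
      rintro (h | h)
      · exact absurd h (by simp)
      · exact absurd h (by simp)
    · exact iff_of_true (by omega) (Sum.Lex.inl_lt_inr _ _)
  have hQ : List.Pairwise Qrel e :=
    pairwise_of_mem_shuffleList E' E'' hQ1 hQ2 hcross e he
  -- lengths
  have hel : e.length = k' + m' := by
    rw [length_of_mem_shuffleList he, hE'len, hE''len]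
  -- the standardization of the letters of the shuffle is the shuffled standardization
  set sl := (e.map Prod.fst).map Prod.fst with hsl
  set tl := (e.map Prod.snd).map Prod.fst with htl
  have hsllen : sl.length = e.length := by simp [hsl]
  have htllen : tl.length = e.length := by simp [htl]
  have hslget : ∀ (i : ℕ) (h : i < e.length), sl[i]'(by omega) = (e[i]'h).1.1 := by
    intro i h
    simp only [hsl]
    rw [List.getElem_map, List.getElem_map]
  have htlget : ∀ (i : ℕ) (h : i < e.length), tl[i]'(by omega) = (e[i]'h).2.1 := by
    intro i h
    simp only [htl]
    rw [List.getElem_map, List.getElem_map]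
  have htlperm : tl.Perm (List.range sl.length) := by
    rw [hsllen, hel]
    have hE'snd : E'.map Prod.snd = B' :=
      List.map_snd_zip (by simp [hB'len, hE', hB'])
    have hE''snd : E''.map Prod.snd = B'' :=
      List.map_snd_zip (by simp [hB''len, hE'', hB''])
    have h1 : tl.Perm ((B' ++ B'').map Prod.fst) := by
      have h0 := (hperm.map Prod.snd).map Prod.fst
      simpa [htl, List.map_append, hE'snd, hE''snd] using h0
    rw [List.map_append, hB'fst, hB''fst] at h1
    refine h1.trans ?_
    have h2 : (stdList v').Perm (List.range k') := by
      rw [← hv'len]; exact stdList_perm_range v'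
    have h3 : ((stdList v'').map (· + k')).Perm ((List.range m').map (· + k')) := by
      refine List.Perm.map _ ?_
      rw [← hv''len]; exact stdList_perm_range v''
    refine (h2.append h3).trans ?_
    rw [List.range_add]
    refine List.Perm.append_left _ ?_
    have : (List.range m').map (· + k') = (List.range m').map (fun x => k' + x) := by
      apply List.map_congr_left; intro x _; omega
    rw [this]
  have hpat : ∀ (i j : ℕ) (hi : i < sl.length) (hj : j < sl.length),
      tl[j]'(by omega) < tl[i]'(by omega) ↔
        (sl[j] < sl[i] ∨ (sl[j] = sl[i] ∧ j < i)) := by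
    intro i j hi hj
    have hie : i < e.length := by omega
    have hje : j < e.length := by omega
    rw [hslget i hie, hslget j hje, htlget i hie, htlget j hje]
    rcases lt_trichotomy i j with hij | hij | hij
    · have hq := (List.pairwise_iff_getElem.1 hQ) i j hie hje hij
      rw [hq.2]
      constructor
      · intro h; exact Or.inl h
      · rintro (h | ⟨h, h2⟩)
        · exact h
        · omega
    · subst hij
      constructor
      · intro h; exact absurd h (lt_irrefl _)
      · rintro (h | ⟨h, h2⟩)
        · exact absurd h (lt_irrefl _)
        · omega
    · have hq := (List.pairwise_iff_getElem.1 hQ) j i hje hie hij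
      rw [hq.1]
      constructor
      · rintro (h | h)
        · exact Or.inl h
        · exact Or.inr ⟨h, hij⟩
      · rintro (h | ⟨h, h2⟩)
        · exact Or.inl h
        · exact Or.inr h
  have hstd : stdList sl = tl :=
    stdList_eq_of_pattern sl tl (by omega) htlperm hpat
  -- colors of the shuffle agree with the colors of the standardized word
  have hsndeq : (e.map Prod.fst).map Prod.snd = (e.map Prod.snd).map Prod.snd := by
    apply List.ext_getElem (by simp)
    intro i h1 h2
    have hie : i < e.length := by simpa using h1
    rw [List.getElem_map, List.getElem_map, List.getElem_map, List.getElem_map]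
    exact hcol _ (List.getElem_mem _)
  -- final comparison of the indicators
  have hiff : (stdList ((e.map Prod.fst).map Prod.fst) = permList σ ∧
      (e.map Prod.fst).map Prod.snd = colorList u) ↔ e.map Prod.snd = cpWord σ u := by
    rw [← hsl, hstd, hsndeq]
    constructor
    · rintro ⟨h1, h2⟩
      refine pairlist_ext ?_ ?_
      · rw [← htl, h1, cpWord_map_fst]
      · rw [h2, cpWord_map_snd]
    · intro h
      constructor
      · rw [htl, h, cpWord_map_fst]
      · rw [h, cpWord_map_snd]
  rw [Gfun, if_congr hiff rfl rfl]

end Crux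

section Part1
variable {ℓ : ℕ}

theorem part1 (ℓ n : ℕ) (σ : Equiv.Perm (Fin n)) (u : Fin n → Fin ℓ)
    (w' w'' : List (ℕ × Fin ℓ)) :
    ((shuffleList (w'.map embL) (w''.map embR)).map
        (Gfun (α := ℕ ⊕ₗ ℕ) σ u)).sum =
      ∑ k ∈ Finset.range (n + 1),
        ∑ σ' : Equiv.Perm (Fin k), ∑ σ'' : Equiv.Perm (Fin (n - k)),
        ∑ u' : Fin k → Fin ℓ, ∑ u'' : Fin (n - k) → Fin ℓ,
          (if cpWord σ u ∈ shuffleList (cpWord σ' u') (shiftW k (cpWord σ'' u''))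
           then Gfun (α := ℕ) σ' u' w' * Gfun (α := ℕ) σ'' u'' w'' else 0) := by
  classical
  set v' : List ℕ := w'.map Prod.fst with hv'
  set v'' : List ℕ := w''.map Prod.fst with hv''
  set B' : List (ℕ × Fin ℓ) := cpWord (wPerm w') (wCol w') with hB'
  set B'' : List (ℕ × Fin ℓ) := shiftW w'.length (cpWord (wPerm w'') (wCol w'')) with hB''
  set E' := (w'.map embL).zip B' with hE'
  set E'' := (w''.map embR).zip B'' with hE''
  have hB'len : B'.length = w'.length := by simp [hB']
  have hB''len : B''.length = w''.length := by simp [hB'']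
  have hB'fst : B'.map Prod.fst = stdList v' := by
    rw [hB', cpWord_map_fst, permList_wPerm, hv']
  have hB'snd : B'.map Prod.snd = w'.map Prod.snd := by
    rw [hB', cpWord_map_snd, colorList_wCol]
  have hB''fst : B''.map Prod.fst = (stdList v'').map (· + w'.length) := by
    rw [hB'', shiftW_map_fst, cpWord_map_fst, permList_wPerm, hv'']
  have hB''snd : B''.map Prod.snd = w''.map Prod.snd := by
    rw [hB'', shiftW_map_snd, cpWord_map_snd, colorList_wCol]
  have hE'fst : E'.map Prod.fst = w'.map embL :=
    List.map_fst_zip (by simp [hB'len])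
  have hE''fst : E''.map Prod.fst = w''.map embR :=
    List.map_fst_zip (by simp [hB''len])
  have hE'snd : E'.map Prod.snd = B' :=
    List.map_snd_zip (by simp [hB'len])
  have hE''snd : E''.map Prod.snd = B'' :=
    List.map_snd_zip (by simp [hB''len])
  -- Step 1 : LHS equals the indicator of the membership of `cpWord σ u`
  have hnodup : (shuffleList B' B'').Nodup := by
    apply nodup_shuffleList
    intro x hx y hy hxy
    have hx1 : x.1 ∈ stdList v' := by
      rw [← hB'fst]
      exact List.mem_map_of_mem (f := Prod.fst) hx
    have hx2 : x.1 < w'.length := by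
      have := stdList_mem_lt v' hx1
      simpa [hv'] using this
    have hy2 : w'.length ≤ y.1 := by
      have : y.1 ∈ B''.map Prod.fst := List.mem_map_of_mem (f := Prod.fst) hy
      rw [hB''fst] at this
      obtain ⟨a, -, ha⟩ := List.mem_map.1 this
      omega
    rw [hxy] at hx2
    omega
  have hLHS : ((shuffleList (w'.map embL) (w''.map embR)).map
      (Gfun (α := ℕ ⊕ₗ ℕ) σ u)).sum
      = (if cpWord σ u ∈ shuffleList B' B'' then (1 : ℤ) else 0) := by
    rw [← hE'fst, ← hE''fst, shuffleList_map Prod.fst, List.map_map]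
    have hstep : (shuffleList E' E'').map (Gfun (α := ℕ ⊕ₗ ℕ) σ u ∘ List.map Prod.fst)
        = (shuffleList E' E'').map
          ((fun t => if t = cpWord σ u then (1 : ℤ) else 0) ∘ List.map Prod.snd) := by
      apply List.map_congr_left
      intro e he
      exact crux n σ u w' w'' e he
    rw [hstep, ← List.map_map, ← shuffleList_map Prod.snd, hE'snd, hE''snd,
      sum_map_indicator_nodup _ hnodup]
    split_ifs <;> rfl
  rw [hLHS]
  -- Step 2 : RHS equals the same indicator
  by_cases hBig : cpWord σ u ∈ shuffleList B' B''
  case pos =>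
    rw [if_pos hBig]
    have hlen : n = w'.length + w''.length := by
      have := length_of_mem_shuffleList hBig
      simpa [hB'len, hB''len] using this
    have h2 : w''.length = n - w'.length := by omega
    rw [Finset.sum_eq_single_of_mem w'.length (Finset.mem_range.2 (by omega)) ?hk]
    rw [Finset.sum_eq_single_of_mem (wPerm w') (Finset.mem_univ _) ?hσ']
    rw [Finset.sum_eq_single_of_mem ((finCongr h2).permCongr (wPerm w''))
      (Finset.mem_univ _) ?hσ'']
    rw [Finset.sum_eq_single_of_mem (wCol w') (Finset.mem_univ _) ?hu']
    rw [Finset.sum_eq_single_of_mem (wCol w'' ∘ (finCongr h2).symm)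
      (Finset.mem_univ _) ?hu'']
    · rw [cpWord_congr h2 (wPerm w'') (wCol w'')]
      rw [if_pos hBig]
      have g1 : Gfun (α := ℕ) (wPerm w') (wCol w') w' = 1 := by
        rw [Gfun, if_pos ⟨(permList_wPerm w').symm, (colorList_wCol w').symm⟩]
      have g2 : Gfun (α := ℕ) ((finCongr h2).permCongr (wPerm w''))
          (wCol w'' ∘ (finCongr h2).symm) w'' = 1 := by
        rw [Gfun, if_pos]
        constructor
        · rw [permCongr_permList, permList_wPerm]
        · rw [colorList_congr, colorList_wCol]
      rw [g1, g2]
      norm_num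
    case hu'' =>
      intro b _ hb
      have h0 : Gfun (α := ℕ) ((finCongr h2).permCongr (wPerm w'')) b w'' = 0 := by
        rw [Gfun, if_neg]
        rintro ⟨_, hcol⟩
        apply hb
        apply colorList_injective
        rw [← hcol, colorList_congr, colorList_wCol]
      rw [h0, mul_zero, ite_self]
    case hu' =>
      intro b _ hb
      refine Finset.sum_eq_zero fun u'' _ => ?_
      have h0 : Gfun (α := ℕ) (wPerm w') b w' = 0 := by
        rw [Gfun, if_neg]
        rintro ⟨_, hcol⟩
        apply hb
        apply colorList_injective
        rw [← hcol, colorList_wCol]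
      rw [h0, zero_mul, ite_self]
    case hσ'' =>
      intro b _ hb
      refine Finset.sum_eq_zero fun u' _ => Finset.sum_eq_zero fun u'' _ => ?_
      have h0 : Gfun (α := ℕ) b u'' w'' = 0 := by
        rw [Gfun, if_neg]
        rintro ⟨hstdc, _⟩
        apply hb
        apply permList_injective
        rw [← hstdc, permCongr_permList, permList_wPerm]
      rw [h0, mul_zero, ite_self]
    case hσ' =>
      intro b _ hb
      refine Finset.sum_eq_zero fun σ'' _ => Finset.sum_eq_zero fun u' _ =>
        Finset.sum_eq_zero fun u'' _ => ?_
      have h0 : Gfun (α := ℕ) b u' w' = 0 := by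
        rw [Gfun, if_neg]
        rintro ⟨hstdc, _⟩
        apply hb
        apply permList_injective
        rw [← hstdc, permList_wPerm]
      rw [h0, zero_mul, ite_self]
    case hk =>
      intro b _ hb
      refine Finset.sum_eq_zero fun σ' _ => Finset.sum_eq_zero fun σ'' _ =>
        Finset.sum_eq_zero fun u' _ => Finset.sum_eq_zero fun u'' _ => ?_
      rw [Gfun_eq_zero_of_length_ne σ' u' w' (fun hcon => hb hcon.symm), zero_mul, ite_self]
  case neg =>
    rw [if_neg hBig]
    symm
    refine Finset.sum_eq_zero fun k _ => Finset.sum_eq_zero fun σ' _ =>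
      Finset.sum_eq_zero fun σ'' _ => Finset.sum_eq_zero fun u' _ =>
      Finset.sum_eq_zero fun u'' _ => ?_
    by_cases g1 : stdList (w'.map Prod.fst) = permList σ' ∧ w'.map Prod.snd = colorList u'
    case neg =>
      have h0 : Gfun (α := ℕ) σ' u' w' = 0 := by rw [Gfun, if_neg g1]
      rw [h0, zero_mul, ite_self]
    by_cases g2 : stdList (w''.map Prod.fst) = permList σ'' ∧ w''.map Prod.snd = colorList u''
    case neg =>
      have h0 : Gfun (α := ℕ) σ'' u'' w'' = 0 := by rw [Gfun, if_neg g2]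
      rw [h0, mul_zero, ite_self]
    -- both conditions hold : membership would contradict hBig
    rw [if_neg]
    intro hmem
    apply hBig
    have hkl : k = w'.length := by
      have := congrArg List.length g1.1
      simpa [hv'] using this.symm
    subst hkl
    have e1 : cpWord σ' u' = B' := by
      refine pairlist_ext ?_ ?_
      · rw [cpWord_map_fst, hB'fst, ← g1.1]
      · rw [cpWord_map_snd, hB'snd, ← g1.2]
    have e2 : shiftW w'.length (cpWord σ'' u'') = B'' := by
      rw [hB'']
      congr 1
      refine pairlist_ext ?_ ?_
      · rw [cpWord_map_fst, cpWord_map_fst, permList_wPerm, ← g2.1]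
      · rw [cpWord_map_snd, cpWord_map_snd, colorList_wCol, ← g2.2]
    rw [← e1, ← e2]
    exact hmem

end Part1

/-- `FQSym^(ℓ)` with the coproduct `Δf(𝐀) = f(𝐀'⊕𝐀'')` is a bialgebra
(hence a graded connected Hopf algebra).  Concretely:
(1) identifying `f(𝐀')g(𝐀'')` with `f ⊗ g` (letters of the two copies commute, so the
coefficient of `f ⊗ g` at a pair of words `(w', w'')` is the sum of the coefficients of
`f(𝐀'⊕𝐀'')` over all interleavings of `w'` (in the first copy) and `w''` (in the second)),
the coproduct of `G_{σ,u}` is `Δ G_{σ,u} = Σ G_{σ',u'} ⊗ G_{σ'',u''}` over all pairs with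
`(σ,u)` in the shifted shuffle `(σ',u') ⋒ (σ'',u'')`;
(2) `Δ` is an algebra morphism, i.e. the defining product rule of the `G`'s holds verbatim
over the doubled alphabet `𝐀'⊕𝐀''`. -/
theorem stmt_1 (ℓ n : ℕ) (σ : Equiv.Perm (Fin n)) (u : Fin n → Fin ℓ) :
    (∀ w' w'' : List (ℕ × Fin ℓ),
      ((shuffleList (w'.map embL) (w''.map embR)).map
          (Gfun (α := ℕ ⊕ₗ ℕ) σ u)).sum =
        ∑ k ∈ Finset.range (n + 1),
          ∑ σ' : Equiv.Perm (Fin k), ∑ σ'' : Equiv.Perm (Fin (n - k)),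
          ∑ u' : Fin k → Fin ℓ, ∑ u'' : Fin (n - k) → Fin ℓ,
            (if cpWord σ u ∈ shuffleList (cpWord σ' u') (shiftW k (cpWord σ'' u''))
             then Gfun (α := ℕ) σ' u' w' * Gfun (α := ℕ) σ'' u'' w'' else 0))
    ∧ (∀ (k m : ℕ) (σ' : Equiv.Perm (Fin k)) (u' : Fin k → Fin ℓ)
        (σ'' : Equiv.Perm (Fin m)) (u'' : Fin m → Fin ℓ),
        ncMul (Gfun (α := ℕ ⊕ₗ ℕ) σ' u') (Gfun σ'' u'') =
          ∑ τ ∈ Finset.univ.filter (fun τ : Equiv.Perm (Fin (k + m)) =>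
              stdList ((permList τ).take k) = permList σ' ∧
              stdList ((permList τ).drop k) = permList σ''),
            Gfun τ (Fin.append u' u'')) := by
  exact ⟨fun w' w'' => part1 ℓ n σ u w' w'',
    fun k m σ' u' σ'' u'' => part2 (α := ℕ ⊕ₗ ℕ) k m σ' u' σ'' u''⟩
end

section
/- Fix two colors 0 < 1. Call a pair (𝐚,u) of a parking function of size n and a binary color word of length n a level-2 parking function if: only matches of 𝐚 may carry color 1; for every letter of 𝐚 colored 1, all occurrences of the same value to its left also carry color 1; and every value occurring in 𝐚 has at least one occurrence of color 0. Then the span of the elements F_{(𝐚,u)} indexed by level-2 parking functions is a subalgebra of PQSym^(2), and the span of the elements G_{(𝐚,u)} indexed by level-2 parking functions is a subcoalgebra of PQSym^(2). -/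
open scoped BigOperators
open scoped Classical

def dval (w : List ℕ) : ℕ :=
  (((List.range (w.length + 2)).find? fun i =>
      decide (w.countP (fun a => decide (a ≤ i)) < i))).getD (w.length + 1)

def parkAux : ℕ → List ℕ → List ℕ
  | 0, w => w
  | fuel + 1, w =>
      if dval w = w.length + 1 then w
      else parkAux fuel (w.map fun a => if dval w < a then a - 1 else a)

def park (w : List ℕ) : List ℕ := parkAux (w.sum + 1) w

def IsPF (l : List ℕ) : Prop :=
  (∀ a ∈ l, 1 ≤ a ∧ a ≤ l.length) ∧
  ∀ b, 1 ≤ b → b ≤ l.length → b ≤ l.countP (fun a => decide (a ≤ b))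

def wordA {n : ℕ} (f : Fin n → Fin n) : List ℕ :=
  (List.finRange n).map fun i => (f i : ℕ) + 1

abbrev CPFsub (ℓ n : ℕ) := {p : (Fin n → Fin n) × (Fin n → Fin ℓ) // IsPF (wordA p.1)}

abbrev CPF (ℓ : ℕ) := Σ n : ℕ, CPFsub ℓ n

abbrev PQS (ℓ : ℕ) := CPF ℓ →₀ ℤ

abbrev PQS2 (ℓ : ℕ) := (CPF ℓ × CPF ℓ) →₀ ℤ

def wordCPF {ℓ : ℕ} (a : CPF ℓ) : List (ℕ × Fin ℓ) :=
  (List.finRange a.1).map fun i => ((a.2.1.1 i : ℕ) + 1, a.2.1.2 i)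

/-- The product on the `F` basis of `PQSym^(2)`: shifted shuffle of colored parking
functions (colors following their letters). -/
noncomputable def mulFB (a b : CPF 2) : PQS 2 :=
  ∑ c : CPFsub 2 (a.1 + b.1),
    (if wordCPF (⟨a.1 + b.1, c⟩ : CPF 2) ∈
        shuffleList (wordCPF a) (shiftW a.1 (wordCPF b))
     then Finsupp.single (⟨a.1 + b.1, c⟩ : CPF 2) 1 else 0)

noncomputable def mulFx (x y : PQS 2) : PQS 2 :=
  x.sum fun a ca => y.sum fun b cb => (ca * cb) • mulFB a b

/-- The coproduct on the `G` basis of `PQSym^(2)` (shifted shuffle). -/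
noncomputable def deltaPB {ℓ : ℕ} (a : CPF ℓ) : PQS2 ℓ :=
  ∑ k ∈ Finset.range (a.1 + 1),
    ∑ b' : CPFsub ℓ k, ∑ b'' : CPFsub ℓ (a.1 - k),
      (if wordCPF a ∈ shuffleList (wordCPF (⟨k, b'⟩ : CPF ℓ))
            (shiftW k (wordCPF (⟨a.1 - k, b''⟩ : CPF ℓ)))
       then Finsupp.single ((⟨k, b'⟩ : CPF ℓ), (⟨a.1 - k, b''⟩ : CPF ℓ)) 1 else 0)

noncomputable def deltaP {ℓ : ℕ} (x : PQS ℓ) : PQS2 ℓ :=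
  x.sum fun a c => c • deltaPB a

/-- `𝐚` has a match at `b`. -/
def IsMatch (l : List ℕ) (b : ℕ) : Prop :=
  l.countP (fun a => decide (a < b)) = b - 1 ∧ b ≤ l.countP (fun a => decide (a ≤ b))

/-- Level-2 parking functions: only matches may carry color 1; for any letter of color 1
all equal letters to its left also carry color 1; every value has an occurrence of
color 0. -/
def IsL2 (a : CPF 2) : Prop :=
  (∀ i : Fin a.1, a.2.1.2 i = 1 → IsMatch (wordA a.2.1.1) ((a.2.1.1 i : ℕ) + 1))
  ∧ (∀ i j : Fin a.1, a.2.1.2 i = 1 → a.2.1.1 j = a.2.1.1 i → (j : ℕ) < (i : ℕ) →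
      a.2.1.2 j = 1)
  ∧ (∀ i : Fin a.1, ∃ j : Fin a.1, a.2.1.1 j = a.2.1.1 i ∧ a.2.1.2 j = 0)

-- shuffle lemmas (already checked)
theorem mem_shuffle {α : Type} : ∀ (u v w : List α), w ∈ shuffleList u v →
    w.Perm (u ++ v) ∧ u.Sublist w ∧ v.Sublist w
  | [], v, w, h => by
      simp [shuffleList] at h; subst h; exact ⟨by simp, by simp, List.Sublist.refl _⟩
  | a :: u, [], w, h => by
      simp [shuffleList] at h; subst h; exact ⟨by simp, List.Sublist.refl _, by simp⟩
  | a :: u, b :: v, w, h => by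
      rw [shuffleList] at h
      simp only [List.mem_append, List.mem_map] at h
      rcases h with ⟨w', hw', rfl⟩ | ⟨w', hw', rfl⟩
      · obtain ⟨h1, h2, h3⟩ := mem_shuffle u (b :: v) w' hw'
        exact ⟨h1.cons a, h2.cons₂ a, h3.cons a⟩
      · obtain ⟨h1, h2, h3⟩ := mem_shuffle (a :: u) v w' hw'
        refine ⟨?_, h2.cons b, h3.cons₂ b⟩
        exact (h1.cons b).trans (List.perm_middle).symm
  termination_by u v => u.length + v.length

lemma filter_shuf_eq {α : Type} {u v w : List α} {p : α → Bool}
    (hperm : w.Perm (u ++ v)) (hsub : u.Sublist w) (hv : v.filter p = []) :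
    w.filter p = u.filter p := by
  have h1 : (u.filter p).Sublist (w.filter p) := hsub.filter p
  have h2 : (w.filter p).length = (u.filter p).length := by
    have := hperm.countP_eq p
    simp [List.countP_append, ← List.countP_eq_length_filter, this,
      List.countP_eq_length_filter (l := v), hv]
  exact (h1.eq_of_length h2.symm).symm

lemma pairwise_of_lt_mem {n : ℕ} {R : Fin n → Fin n → Prop} :
    ∀ {L : List (Fin n)}, L.Pairwise (· < ·) → L.Pairwise R →
    ∀ {x y : Fin n}, x ∈ L → y ∈ L → x < y → R x y
  | [], _, _, _, _, hx, _, _ => by simp at hx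
  | a :: t, hlt, hR, x, y, hx, hy, hxy => by
      rw [List.pairwise_cons] at hlt hR
      rcases List.mem_cons.1 hx with rfl | hx1
      · rcases List.mem_cons.1 hy with rfl | hy1
        · exact absurd hxy (lt_irrefl _)
        · exact hR.1 y hy1
      · rcases List.mem_cons.1 hy with rfl | hy1
        · exact absurd ((hlt.1 x hx1).trans hxy) (lt_irrefl _)
        · exact pairwise_of_lt_mem hlt.2 hR.2 hx1 hy1 hxy

/-- list-level reformulation of `IsL2`. -/
def L2W (w : List (ℕ × Fin 2)) : Prop :=
  (∀ p ∈ w, p.2 = (1 : Fin 2) → IsMatch (w.map Prod.fst) p.1) ∧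
  (∀ v : ℕ, ((w.filter (fun p => decide (p.1 = v))).map Prod.snd).Pairwise (· ≥ ·)) ∧
  (∀ v : ℕ, (∃ p ∈ w, p.1 = v) → ∃ p ∈ w, p.1 = v ∧ p.2 = (0 : Fin 2))

lemma wordA_eq_map_fst {ℓ : ℕ} (a : CPF ℓ) : wordA a.2.1.1 = (wordCPF a).map Prod.fst := by
  simp [wordA, wordCPF]

lemma wordCPF_eq {ℓ : ℕ} (a : CPF ℓ) :
    wordCPF a = (List.finRange a.1).map (fun i => ((a.2.1.1 i : ℕ) + 1, a.2.1.2 i)) := rfl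

lemma isL2_iff (a : CPF 2) : IsL2 a ↔ L2W (wordCPF a) := by
  obtain ⟨n, ⟨⟨f, g⟩, hpf⟩⟩ := a
  unfold IsL2
  dsimp only
  have hword : wordCPF ⟨n, ⟨(f, g), hpf⟩⟩
      = (List.finRange n).map (fun i => ((f i : ℕ) + 1, g i)) := rfl
  rw [hword]
  set w := (List.finRange n).map (fun i => ((f i : ℕ) + 1, g i)) with hw
  have hwA : wordA f = w.map Prod.fst := by simp [wordA, hw]
  constructor
  · rintro ⟨h1, h2, h3⟩
    refine ⟨?_, ?_, ?_⟩
    · rintro p hp hc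
      simp only [hw, List.mem_map, List.mem_finRange, true_and] at hp
      obtain ⟨i, rfl⟩ := hp
      rw [← hwA]
      exact h1 i hc
    · intro v
      rw [hw, List.filter_map, List.map_map, List.pairwise_map]
      have hplt : ((List.finRange n).filter
          ((fun p => decide (p.1 = v)) ∘ fun i => ((f i : ℕ) + 1, g i))).Pairwise (· < ·) :=
        List.Pairwise.sublist List.filter_sublist (List.pairwise_lt_finRange n)
      refine hplt.imp_of_mem ?_
      intro i j hi hj hij
      simp only [List.mem_filter, Function.comp, decide_eq_true_eq] at hi hj
      obtain ⟨-, hiv⟩ := hi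
      obtain ⟨-, hjv⟩ := hj
      show g i ≥ g j
      by_cases hgj : g j = 1
      · have hgi : g i = 1 := h2 j i hgj (Fin.ext (by omega)) hij
        rw [hgi, hgj]
      · have hgj0 : g j = 0 := by omega
        rw [hgj0]
        exact Fin.zero_le _
    · intro v hv
      obtain ⟨p, hp, hpv⟩ := hv
      simp only [hw, List.mem_map, List.mem_finRange, true_and] at hp
      obtain ⟨i, rfl⟩ := hp
      obtain ⟨j, hj1, hj2⟩ := h3 i
      refine ⟨((f j : ℕ) + 1, g j), List.mem_map_of_mem (List.mem_finRange j), ?_, hj2⟩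
      show (f j : ℕ) + 1 = v
      rw [hj1]
      exact hpv
  · rintro ⟨h1, h2, h3⟩
    refine ⟨?_, ?_, ?_⟩
    · intro i hc
      rw [hwA]
      exact h1 ((f i : ℕ) + 1, g i) (List.mem_map_of_mem (List.mem_finRange i)) hc
    · intro i j hgi hfj hji
      set v := (f i : ℕ) + 1 with hv
      have h2v := h2 v
      rw [hw, List.filter_map, List.map_map, List.pairwise_map] at h2v
      have hplt : ((List.finRange n).filter
          ((fun p => decide (p.1 = v)) ∘ fun i => ((f i : ℕ) + 1, g i))).Pairwise (· < ·) :=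
        List.Pairwise.sublist List.filter_sublist (List.pairwise_lt_finRange n)
      have hmemj : j ∈ (List.finRange n).filter
          ((fun p => decide (p.1 = v)) ∘ fun i => ((f i : ℕ) + 1, g i)) := by
        simp [Function.comp, hfj, hv]
      have hmemi : i ∈ (List.finRange n).filter
          ((fun p => decide (p.1 = v)) ∘ fun i => ((f i : ℕ) + 1, g i)) := by
        simp [Function.comp, hv]
      have hge := pairwise_of_lt_mem hplt h2v hmemj hmemi hji
      have h' : g i ≤ g j := hge
      refine Fin.ext ?_
      have h'' := Fin.le_def.mp h'
      rw [hgi] at h''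
      have hlt2 := (g j).isLt
      simp only [Fin.val_one] at h'' ⊢
      omega
    · intro i
      obtain ⟨p, hp1, hp2, hp3⟩ := h3 ((f i : ℕ) + 1)
        ⟨((f i : ℕ) + 1, g i), List.mem_map_of_mem (List.mem_finRange i), rfl⟩
      simp only [hw, List.mem_map, List.mem_finRange, true_and] at hp1
      obtain ⟨j, rfl⟩ := hp1
      exact ⟨j, Fin.ext (by simp at hp2; omega), hp3⟩

lemma L2W_shuffle_iff {u v w : List (ℕ × Fin 2)} {k : ℕ}
    (hk : u.length = k)
    (hu : ∀ p ∈ u, 1 ≤ p.1 ∧ p.1 ≤ k)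
    (hv : ∀ p ∈ v, 1 ≤ p.1)
    (hw : w ∈ shuffleList u (shiftW k v)) :
    L2W w ↔ L2W u ∧ L2W v := by
  obtain ⟨hperm, hsubu, hsubv⟩ := mem_shuffle _ _ _ hw
  have memw : ∀ p : ℕ × Fin 2, p ∈ w ↔ p ∈ u ∨ p ∈ shiftW k v := by
    intro p; rw [hperm.mem_iff, List.mem_append]
  have shmem : ∀ p : ℕ × Fin 2, p ∈ shiftW k v ↔ ∃ r ∈ v, (r.1 + k, r.2) = p := by
    intro p; simp [shiftW]
  have cnt : ∀ q : ℕ → Bool, (w.map Prod.fst).countP q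
      = (u.map Prod.fst).countP q + (v.map Prod.fst).countP (fun x => q (x + k)) := by
    intro q
    have h1 := (hperm.map Prod.fst).countP_eq q
    rw [List.map_append] at h1
    rw [h1, List.countP_append]
    congr 1
    have h2 : (shiftW k v).map Prod.fst = (v.map Prod.fst).map (· + k) := by
      simp [shiftW, List.map_map]
    rw [h2, List.countP_map]
    rfl
  have match_low : ∀ b ≤ k, (IsMatch (w.map Prod.fst) b ↔ IsMatch (u.map Prod.fst) b) := by
    intro b hb
    have hlt0 : (v.map Prod.fst).countP (fun x => decide (x + k < b)) = 0 := by
      rw [List.countP_eq_zero]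
      intro a ha
      simp only [decide_eq_true_eq]
      omega
    have hle0 : (v.map Prod.fst).countP (fun x => decide (x + k ≤ b)) = 0 := by
      rw [List.countP_eq_zero]
      intro a ha
      obtain ⟨p, hp, rfl⟩ := List.mem_map.1 ha
      have := hv p hp
      simp only [decide_eq_true_eq]
      omega
    unfold IsMatch
    rw [cnt _, cnt _, hlt0, hle0]
    simp
  have match_high : ∀ b0, 1 ≤ b0 →
      (IsMatch (w.map Prod.fst) (b0 + k) ↔ IsMatch (v.map Prod.fst) b0) := by
    intro b0 hb0
    have hult : (u.map Prod.fst).countP (fun a => decide (a < b0 + k)) = k := by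
      rw [List.countP_eq_length.2, List.length_map, hk]
      intro a ha
      obtain ⟨p, hp, rfl⟩ := List.mem_map.1 ha
      have := hu p hp
      simp only [decide_eq_true_eq]
      omega
    have hule : (u.map Prod.fst).countP (fun a => decide (a ≤ b0 + k)) = k := by
      rw [List.countP_eq_length.2, List.length_map, hk]
      intro a ha
      obtain ⟨p, hp, rfl⟩ := List.mem_map.1 ha
      have := hu p hp
      simp only [decide_eq_true_eq]
      omega
    have hclt : (v.map Prod.fst).countP (fun x => decide (x + k < b0 + k))
        = (v.map Prod.fst).countP (fun x => decide (x < b0)) := by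
      apply List.countP_congr
      intro a _
      simp only [decide_eq_true_eq]
      omega
    have hcle : (v.map Prod.fst).countP (fun x => decide (x + k ≤ b0 + k))
        = (v.map Prod.fst).countP (fun x => decide (x ≤ b0)) := by
      apply List.countP_congr
      intro a _
      simp only [decide_eq_true_eq]
      omega
    unfold IsMatch
    rw [cnt _, cnt _, hult, hule, hclt, hcle]
    constructor
    · rintro ⟨h1, h2⟩; exact ⟨by omega, by omega⟩
    · rintro ⟨h1, h2⟩; exact ⟨by omega, by omega⟩
  have fil_low : ∀ val ≤ k, w.filter (fun p => decide (p.1 = val))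
      = u.filter (fun p => decide (p.1 = val)) := by
    intro val hval
    apply filter_shuf_eq hperm hsubu
    rw [List.filter_eq_nil_iff]
    intro p hp
    obtain ⟨r, hr, rfl⟩ := (shmem p).1 hp
    have := hv r hr
    simp only [decide_eq_true_eq]
    omega
  have fil_high : ∀ b0, 1 ≤ b0 → w.filter (fun p => decide (p.1 = b0 + k))
      = shiftW k (v.filter (fun p => decide (p.1 = b0))) := by
    intro b0 hb0
    have h1 : w.filter (fun p => decide (p.1 = b0 + k))
        = (shiftW k v).filter (fun p => decide (p.1 = b0 + k)) := by
      apply filter_shuf_eq (hperm.trans List.perm_append_comm) hsubv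
      rw [List.filter_eq_nil_iff]
      intro p hp
      have := hu p hp
      simp only [decide_eq_true_eq]
      omega
    rw [h1]
    show ((v.map fun p => (p.1 + k, p.2)).filter (fun p => decide (p.1 = b0 + k))) = _
    rw [List.filter_map]
    show _ = (v.filter (fun p => decide (p.1 = b0))).map fun p => (p.1 + k, p.2)
    congr 1
    apply List.filter_congr
    intro p _
    simp only [Function.comp, decide_eq_decide]
    omega
  have usnd : ∀ (l : List (ℕ × Fin 2)), (shiftW k l).map Prod.snd = l.map Prod.snd := by
    intro l; simp [shiftW, List.map_map]
  constructor
  · rintro ⟨w1, w2, w3⟩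
    refine ⟨⟨?_, ?_, ?_⟩, ?_, ?_, ?_⟩
    · intro p hp hc
      exact (match_low p.1 (hu p hp).2).1 (w1 p (hsubu.subset hp) hc)
    · intro val
      by_cases hval : val ≤ k
      · rw [← fil_low val hval]; exact w2 val
      · have : u.filter (fun p => decide (p.1 = val)) = [] := by
          rw [List.filter_eq_nil_iff]
          intro p hp
          have := hu p hp
          simp only [decide_eq_true_eq]
          omega
        rw [this]
        simp
    · intro val hval
      obtain ⟨p, hp, hpv⟩ := hval
      obtain ⟨q, hq, hq1, hq2⟩ := w3 val ⟨p, (memw p).2 (Or.inl hp), hpv⟩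
      rcases (memw q).1 hq with hq' | hq'
      · exact ⟨q, hq', hq1, hq2⟩
      · exfalso
        obtain ⟨r, hr, rfl⟩ := (shmem q).1 hq'
        have h1 := hv r hr
        have h2 := (hu p hp).2
        simp only at hq1
        omega
    · intro p hp hc
      have hmem : (p.1 + k, p.2) ∈ w := (memw _).2 (Or.inr ((shmem _).2 ⟨p, hp, rfl⟩))
      have := w1 _ hmem hc
      exact (match_high p.1 (hv p hp)).1 this
    · intro val
      by_cases hval : 1 ≤ val
      · have := w2 (val + k)
        rw [fil_high val hval, usnd] at this
        exact this
      · have : v.filter (fun p => decide (p.1 = val)) = [] := by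
          rw [List.filter_eq_nil_iff]
          intro p hp
          have := hv p hp
          simp only [decide_eq_true_eq]
          omega
        rw [this]
        simp
    · intro val hval
      obtain ⟨p, hp, hpv⟩ := hval
      have hval1 : 1 ≤ val := hpv ▸ hv p hp
      have hmem : (p.1 + k, p.2) ∈ w := (memw _).2 (Or.inr ((shmem _).2 ⟨p, hp, rfl⟩))
      obtain ⟨q, hq, hq1, hq2⟩ := w3 (val + k) ⟨(p.1 + k, p.2), hmem, by simp [hpv]⟩
      rcases (memw q).1 hq with hq' | hq'
      · exfalso
        have := (hu q hq').2
        omega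
      · obtain ⟨r, hr, rfl⟩ := (shmem q).1 hq'
        simp only at hq1 hq2
        exact ⟨r, hr, by omega, hq2⟩
  · rintro ⟨⟨u1, u2, u3⟩, v1, v2, v3⟩
    refine ⟨?_, ?_, ?_⟩
    · intro p hp hc
      rcases (memw p).1 hp with hp' | hp'
      · exact (match_low p.1 (hu p hp').2).2 (u1 p hp' hc)
      · obtain ⟨r, hr, rfl⟩ := (shmem p).1 hp'
        exact (match_high r.1 (hv r hr)).2 (v1 r hr hc)
    · intro val
      by_cases hval : val ≤ k
      · rw [fil_low val hval]; exact u2 val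
      · have hvk : val = (val - k) + k := by omega
        rw [hvk, fil_high (val - k) (by omega), usnd]
        exact v2 (val - k)
    · intro val hval
      obtain ⟨p, hp, hpv⟩ := hval
      rcases (memw p).1 hp with hp' | hp'
      · obtain ⟨q, hq, hq1, hq2⟩ := u3 val ⟨p, hp', hpv⟩
        exact ⟨q, (memw q).2 (Or.inl hq), hq1, hq2⟩
      · obtain ⟨r, hr, rfl⟩ := (shmem p).1 hp'
        obtain ⟨q, hq, hq1, hq2⟩ := v3 r.1 ⟨r, hr, rfl⟩
        refine ⟨(q.1 + k, q.2), (memw _).2 (Or.inr ((shmem _).2 ⟨q, hq, rfl⟩)), ?_, hq2⟩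
        simp only at hpv ⊢
        omega

lemma wordCPF_length {ℓ : ℕ} (a : CPF ℓ) : (wordCPF a).length = a.1 := by
  simp [wordCPF]

lemma wordCPF_bounds {ℓ : ℕ} (a : CPF ℓ) : ∀ p ∈ wordCPF a, 1 ≤ p.1 ∧ p.1 ≤ a.1 := by
  intro p hp
  simp only [wordCPF, List.mem_map, List.mem_finRange, true_and] at hp
  obtain ⟨i, rfl⟩ := hp
  have := (a.2.1.1 i).isLt
  simp only
  omega

noncomputable def SF : Submodule ℤ (PQS 2) :=
  Submodule.span ℤ {z : PQS 2 | ∃ a : CPF 2, IsL2 a ∧ z = Finsupp.single a 1}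

noncomputable def SG : Submodule ℤ (PQS2 2) :=
  Submodule.span ℤ {z : PQS2 2 | ∃ a b : CPF 2, IsL2 a ∧ IsL2 b ∧ z = Finsupp.single (a, b) 1}

lemma mulFB_mem (a b : CPF 2) (ha : IsL2 a) (hb : IsL2 b) : mulFB a b ∈ SF := by
  unfold mulFB
  apply Submodule.sum_mem
  intro c _
  split_ifs with h
  · apply Submodule.subset_span
    refine ⟨⟨a.1 + b.1, c⟩, ?_, rfl⟩
    rw [isL2_iff]
    exact (L2W_shuffle_iff (wordCPF_length a) (wordCPF_bounds a)
      (fun p hp => (wordCPF_bounds b p hp).1) h).2 ⟨(isL2_iff a).1 ha, (isL2_iff b).1 hb⟩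
  · exact Submodule.zero_mem _

lemma deltaPB_mem (a : CPF 2) (ha : IsL2 a) : deltaPB a ∈ SG := by
  unfold deltaPB
  apply Submodule.sum_mem
  intro k _
  apply Submodule.sum_mem
  intro b' _
  apply Submodule.sum_mem
  intro b'' _
  split_ifs with h
  · apply Submodule.subset_span
    have hL2 := (L2W_shuffle_iff (wordCPF_length (⟨k, b'⟩ : CPF 2))
      (wordCPF_bounds (⟨k, b'⟩ : CPF 2)) (fun p hp => (wordCPF_bounds (⟨a.1 - k, b''⟩ : CPF 2) p hp).1) h).1
      ((isL2_iff a).1 ha)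
    exact ⟨⟨k, b'⟩, ⟨a.1 - k, b''⟩, (isL2_iff _).2 hL2.1, (isL2_iff _).2 hL2.2, rfl⟩
  · exact Submodule.zero_mem _

lemma mulFx_zero_left (y : PQS 2) : mulFx 0 y = 0 := Finsupp.sum_zero_index

lemma mulFx_zero_right (x : PQS 2) : mulFx x 0 = 0 := by
  unfold mulFx
  simp [Finsupp.sum_zero_index, Finsupp.sum]

lemma mulFx_add_left (x1 x2 y : PQS 2) : mulFx (x1 + x2) y = mulFx x1 y + mulFx x2 y := by
  unfold mulFx
  apply Finsupp.sum_add_index'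
  · intro a; simp [Finsupp.sum]
  · intro a b1 b2
    rw [← Finsupp.sum_add]
    congr 1
    ext b cb
    rw [add_mul, add_smul]

lemma mulFx_add_right (x y1 y2 : PQS 2) : mulFx x (y1 + y2) = mulFx x y1 + mulFx x y2 := by
  unfold mulFx
  rw [← Finsupp.sum_add]
  apply Finsupp.sum_congr
  intro a _
  apply Finsupp.sum_add_index'
  · intro b; simp
  · intro b c1 c2
    rw [mul_add, add_smul]

lemma mulFx_smul_left (c : ℤ) (x y : PQS 2) : mulFx (c • x) y = c • mulFx x y := by
  unfold mulFx
  rw [Finsupp.sum_smul_index (by intro a; simp [Finsupp.sum]), Finsupp.smul_sum]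
  apply Finsupp.sum_congr
  intro a _
  rw [Finsupp.smul_sum]
  apply Finsupp.sum_congr
  intro b _
  rw [smul_smul]
  congr 1
  ring

lemma mulFx_smul_right (c : ℤ) (x y : PQS 2) : mulFx x (c • y) = c • mulFx x y := by
  unfold mulFx
  rw [Finsupp.smul_sum]
  apply Finsupp.sum_congr
  intro a _
  rw [Finsupp.sum_smul_index (by intro b; simp), Finsupp.smul_sum]
  apply Finsupp.sum_congr
  intro b _
  rw [smul_smul]
  congr 1
  ring

lemma mulFx_single_single (a b : CPF 2) :
    mulFx (Finsupp.single a 1) (Finsupp.single b 1) = mulFB a b := by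
  unfold mulFx
  rw [Finsupp.sum_single_index (by simp [Finsupp.sum]),
    Finsupp.sum_single_index (by simp)]
  simp

lemma deltaP_zero : deltaP (0 : PQS 2) = 0 := Finsupp.sum_zero_index

lemma deltaP_add (x y : PQS 2) : deltaP (x + y) = deltaP x + deltaP y := by
  unfold deltaP
  apply Finsupp.sum_add_index'
  · intro a; simp
  · intro a b1 b2; rw [add_smul]

lemma deltaP_smul (c : ℤ) (x : PQS 2) : deltaP (c • x) = c • deltaP x := by
  unfold deltaP
  rw [Finsupp.sum_smul_index (by intro a; simp), Finsupp.smul_sum]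
  apply Finsupp.sum_congr
  intro a _
  rw [smul_smul]

lemma deltaP_single (a : CPF 2) : deltaP (Finsupp.single a (1 : ℤ)) = deltaPB a := by
  unfold deltaP
  rw [Finsupp.sum_single_index (by simp)]
  simp

/-- STATEMENT 18: the span of the `F_{(𝐚,u)}` indexed by level-2 parking functions is a
subalgebra of `PQSym^(2)`, and the span of the `G_{(𝐚,u)}` indexed by level-2 parking
functions is a subcoalgebra of `PQSym^(2)`. -/
theorem stmt_18 :
    (∀ x y : PQS 2,
      x ∈ Submodule.span ℤ {z : PQS 2 | ∃ a : CPF 2, IsL2 a ∧ z = Finsupp.single a 1} →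
      y ∈ Submodule.span ℤ {z : PQS 2 | ∃ a : CPF 2, IsL2 a ∧ z = Finsupp.single a 1} →
      mulFx x y ∈
        Submodule.span ℤ {z : PQS 2 | ∃ a : CPF 2, IsL2 a ∧ z = Finsupp.single a 1})
    ∧ (∀ x : PQS 2,
      x ∈ Submodule.span ℤ {z : PQS 2 | ∃ a : CPF 2, IsL2 a ∧ z = Finsupp.single a 1} →
      deltaP x ∈ Submodule.span ℤ {z : PQS2 2 |
        ∃ a b : CPF 2, IsL2 a ∧ IsL2 b ∧ z = Finsupp.single (a, b) 1}) := by
  constructor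
  · intro x y hx hy
    show mulFx x y ∈ SF
    induction hx using Submodule.span_induction with
    | mem x' hx' =>
      induction hy using Submodule.span_induction with
      | mem y' hy' =>
        obtain ⟨a, ha, rfl⟩ := hx'
        obtain ⟨b, hb, rfl⟩ := hy'
        rw [mulFx_single_single]
        exact mulFB_mem a b ha hb
      | zero => rw [mulFx_zero_right]; exact Submodule.zero_mem _
      | add y1 y2 _ _ h1 h2 => rw [mulFx_add_right]; exact Submodule.add_mem _ h1 h2
      | smul c y' _ h => rw [mulFx_smul_right]; exact Submodule.smul_mem _ c h
    | zero => rw [mulFx_zero_left]; exact Submodule.zero_mem _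
    | add x1 x2 _ _ h1 h2 => rw [mulFx_add_left]; exact Submodule.add_mem _ h1 h2
    | smul c x' _ h => rw [mulFx_smul_left]; exact Submodule.smul_mem _ c h
  · intro x hx
    show deltaP x ∈ SG
    induction hx using Submodule.span_induction with
    | mem x' hx' =>
      obtain ⟨a, ha, rfl⟩ := hx'
      rw [deltaP_single]
      exact deltaPB_mem a ha
    | zero => rw [deltaP_zero]; exact Submodule.zero_mem _
    | add x1 x2 _ _ h1 h2 => rw [deltaP_add]; exact Submodule.add_mem _ h1 h2
    | smul c x' _ h => rw [deltaP_smul]; exact Submodule.smul_mem _ c h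
end
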